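/- arXiv:2412.20204 — 4 statements merged into one kernel-verified Lean document; each statement's English description precedes it below -/
import Mathlib

section
/- Let Θ ⊂ ℝ^p be convex and compact, let s ≥ 1, and let A be a map from ℝ^p to the d×d real symmetric positive semidefinite matrices that is s-times continuously differentiable on Θ. Suppose the rank of A(θ) is a constant r with 1 ≤ r ≤ d for all θ ∈ Θ, and every nonzero eigenvalue of A(θ) lies in [λ̲, λ̄] for some 0 < λ̲ ≤ λ̄ < ∞ and all θ ∈ Θ. Then there exists δ > 0 such that for every θ₀ ∈ Θ there exist matrix-valued maps M (d×d) and B (r×r), both s-times continuously differentiable on the set {θ ∈ Θ : ‖θ − θ₀‖ ≤ δ}, and constants 0 < λ̲_B ≤ λ̄_B < ∞, such that for all θ in that set: M(θ)·M(θ)ᵀ = I_d, B(θ) is symmetric with all eigenvalues in [λ̲_B, λ̄_B], and A(θ) = M(θ) · blockdiag[B(θ), 0_{m×m}] · M(θ)ᵀ, where m = d − r and blockdiag[B, 0] denotes the d×d block-diagonal matrix with upper-left block B and lower-right block the m×m zero matrix. -/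
open Matrix
open scoped ContDiff
open Topology

attribute [local instance] Matrix.normedAddCommGroup Matrix.normedSpace

namespace BlockDecompAux

variable {E : Type*} [NormedAddCommGroup E] [NormedSpace ℝ E]
variable {n : ℕ∞} {S : Set E}

/-! ### Entrywise smoothness helpers -/

theorem cdMat {ι κ : Type*} [Fintype ι] [Fintype κ] {f : E → Matrix ι κ ℝ}
    (h : ∀ i j, ContDiffOn ℝ n (fun θ => f θ i j) S) : ContDiffOn ℝ n f S := by
  have : ContDiffOn ℝ n (fun θ => (fun i j => f θ i j : ι → κ → ℝ)) S := by
    apply contDiffOn_pi.2; intro i; apply contDiffOn_pi.2; intro j; exact h i j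
  exact this

theorem cdEntry {ι κ : Type*} [Fintype ι] [Fintype κ] {f : E → Matrix ι κ ℝ}
    (hf : ContDiffOn ℝ n f S) (i : ι) (j : κ) :
    ContDiffOn ℝ n (fun θ => f θ i j) S := by
  have hf' : ContDiffOn ℝ n (fun θ => (f θ : ι → κ → ℝ)) S := hf
  exact ((ContinuousLinearMap.proj (R := ℝ) (φ := fun _ : κ => ℝ) j).comp
    (ContinuousLinearMap.proj (R := ℝ) (φ := fun _ : ι => κ → ℝ) i)).contDiff.comp_contDiffOn hf'

theorem cdProd {ι : Type*} {f : ι → E → ℝ} {t : Finset ι}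
    (h : ∀ i ∈ t, ContDiffOn ℝ n (f i) S) :
    ContDiffOn ℝ n (fun θ => ∏ i ∈ t, f i θ) S := by
  classical
  induction t using Finset.induction_on with
  | empty => simpa using contDiffOn_const
  | insert a t' hni ih =>
    next =>
      simp only [Finset.prod_insert hni]
      exact (h a (Finset.mem_insert_self a t')).mul
        (ih fun i hi => h i (Finset.mem_insert_of_mem hi))

theorem cdDet {ι : Type*} [Fintype ι] [DecidableEq ι] {f : E → Matrix ι ι ℝ}
    (hf : ContDiffOn ℝ n f S) :
    ContDiffOn ℝ n (fun θ => (f θ).det) S := by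
  simp only [Matrix.det_apply']
  apply ContDiffOn.sum
  intro σ _
  exact contDiffOn_const.mul (cdProd fun i _ => cdEntry hf (σ i) i)

theorem cdMul {ι κ o : Type*} [Fintype ι] [Fintype κ] [Fintype o]
    {f : E → Matrix ι κ ℝ} {g : E → Matrix κ o ℝ}
    (hf : ContDiffOn ℝ n f S) (hg : ContDiffOn ℝ n g S) :
    ContDiffOn ℝ n (fun θ => f θ * g θ) S := by
  apply cdMat
  intro i j
  simp only [Matrix.mul_apply]
  exact ContDiffOn.sum fun t _ => (cdEntry hf i t).mul (cdEntry hg t j)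

theorem cdTranspose {ι κ : Type*} [Fintype ι] [Fintype κ] {f : E → Matrix ι κ ℝ}
    (hf : ContDiffOn ℝ n f S) :
    ContDiffOn ℝ n (fun θ => (f θ)ᵀ) S :=
  cdMat fun i j => cdEntry hf j i

theorem cdAdd {ι κ : Type*} [Fintype ι] [Fintype κ] {f g : E → Matrix ι κ ℝ}
    (hf : ContDiffOn ℝ n f S) (hg : ContDiffOn ℝ n g S) :
    ContDiffOn ℝ n (fun θ => f θ + g θ) S := by
  apply cdMat
  intro i j
  simp only [Matrix.add_apply]
  exact (cdEntry hf i j).add (cdEntry hg i j)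

theorem cdNeg {ι κ : Type*} [Fintype ι] [Fintype κ] {f : E → Matrix ι κ ℝ}
    (hf : ContDiffOn ℝ n f S) :
    ContDiffOn ℝ n (fun θ => -(f θ)) S := by
  apply cdMat
  intro i j
  simp only [Matrix.neg_apply]
  exact (cdEntry hf i j).neg

theorem cdAdjugate {ι : Type*} [Fintype ι] [DecidableEq ι] {f : E → Matrix ι ι ℝ}
    (hf : ContDiffOn ℝ n f S) :
    ContDiffOn ℝ n (fun θ => (f θ).adjugate) S := by
  apply cdMat
  intro i j
  simp only [Matrix.adjugate_apply]
  apply cdDet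
  apply cdMat
  intro a b
  rcases eq_or_ne a j with rfl | hne
  · simp only [Matrix.updateRow_self]
    exact contDiffOn_const
  · simp only [Matrix.updateRow_ne hne]
    exact cdEntry hf a b

theorem cdInv {ι : Type*} [Fintype ι] [DecidableEq ι] {f : E → Matrix ι ι ℝ}
    (hf : ContDiffOn ℝ n f S)
    (h : ∀ θ ∈ S, IsUnit (f θ).det) : ContDiffOn ℝ n (fun θ => (f θ)⁻¹) S := by
  have heq : ∀ θ ∈ S, (f θ)⁻¹ = ((f θ).det)⁻¹ • (f θ).adjugate := by
    intro θ hθ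
    rw [Matrix.inv_def, Ring.inverse_eq_inv']
  apply ContDiffOn.congr _ heq
  exact ContDiffOn.smul ((cdDet hf).inv fun θ hθ => (h θ hθ).ne_zero) (cdAdjugate hf)

/-! ### Local smooth matrix square root -/

theorem norm_matrix_mul_le {k l o : ℕ} (P : Matrix (Fin k) (Fin l) ℝ)
    (Q : Matrix (Fin l) (Fin o) ℝ) : ‖P * Q‖ ≤ (l : ℝ) * ‖P‖ * ‖Q‖ := by
  have h0 : (0:ℝ) ≤ (l : ℝ) * ‖P‖ * ‖Q‖ := by positivity
  rw [Matrix.norm_le_iff h0]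
  intro i j
  rw [Matrix.mul_apply]
  calc ‖∑ t, P i t * Q t j‖ ≤ ∑ t, ‖P i t * Q t j‖ := norm_sum_le _ _
    _ ≤ ∑ _t : Fin l, ‖P‖ * ‖Q‖ := by
        apply Finset.sum_le_sum; intro t _
        rw [norm_mul]
        exact mul_le_mul (Matrix.norm_entry_le_entrywise_sup_norm P)
          (Matrix.norm_entry_le_entrywise_sup_norm Q) (norm_nonneg _) (norm_nonneg _)
    _ = (l:ℝ) * ‖P‖ * ‖Q‖ := by simp [Finset.sum_const, mul_assoc]

private noncomputable def doubleLE (k : ℕ) :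
    Matrix (Fin k) (Fin k) ℝ ≃ₗ[ℝ] Matrix (Fin k) (Fin k) ℝ where
  toFun Y := (2:ℝ) • Y
  invFun Y := (2:ℝ)⁻¹ • Y
  map_add' := smul_add _
  map_smul' c Y := smul_comm _ c Y
  left_inv Y := by
    show (2:ℝ)⁻¹ • ((2:ℝ) • Y) = Y
    rw [smul_smul]; norm_num
  right_inv Y := by
    show (2:ℝ) • ((2:ℝ)⁻¹ • Y) = Y
    rw [smul_smul]; norm_num

noncomputable def doubleCLE (k : ℕ) :
    Matrix (Fin k) (Fin k) ℝ ≃L[ℝ] Matrix (Fin k) (Fin k) ℝ :=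
  (doubleLE k).toContinuousLinearEquiv

theorem hasFDerivAt_sq (k : ℕ) :
    HasFDerivAt (fun Y : Matrix (Fin k) (Fin k) ℝ => Y * Y)
      (doubleCLE k : Matrix (Fin k) (Fin k) ℝ →L[ℝ] Matrix (Fin k) (Fin k) ℝ) 1 := by
  refine hasFDerivAt_iff_isLittleO_nhds_zero.2 ?_
  have key : ∀ h : Matrix (Fin k) (Fin k) ℝ,
      (1 + h) * (1 + h) - 1 * 1 -
        (doubleCLE k : Matrix (Fin k) (Fin k) ℝ →L[ℝ] Matrix (Fin k) (Fin k) ℝ) h = h * h := by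
    intro h
    have hd : (doubleCLE k : Matrix (Fin k) (Fin k) ℝ →L[ℝ] Matrix (Fin k) (Fin k) ℝ) h
        = h + h := by
      show (2:ℝ) • h = h + h
      rw [two_smul]
    rw [hd]
    simp only [add_mul, mul_add, one_mul, mul_one]
    abel
  refine Asymptotics.IsLittleO.congr_left (f₁ := fun h : Matrix (Fin k) (Fin k) ℝ => h * h) ?_
    (fun h => (key h).symm)
  rw [Asymptotics.isLittleO_iff]
  intro c hc
  have hck : 0 < c / ((k:ℝ)+1) := by positivity
  filter_upwards [Metric.ball_mem_nhds (0 : Matrix (Fin k) (Fin k) ℝ) hck] with h hh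
  rw [mem_ball_zero_iff] at hh
  calc ‖h*h‖ ≤ (k:ℝ) * ‖h‖ * ‖h‖ := norm_matrix_mul_le h h
    _ ≤ c * ‖h‖ := by
        have hk1 : (0:ℝ) < (k:ℝ) + 1 := by positivity
        have h2 : ‖h‖ * ((k:ℝ)+1) < c := by
          rw [← lt_div_iff₀ hk1]; exact hh
        have h3 : (k:ℝ) * ‖h‖ ≤ ‖h‖ * ((k:ℝ)+1) := by nlinarith [norm_nonneg h]
        calc (k:ℝ) * ‖h‖ * ‖h‖ ≤ (‖h‖ * ((k:ℝ)+1)) * ‖h‖ :=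
              mul_le_mul_of_nonneg_right h3 (norm_nonneg h)
          _ ≤ c * ‖h‖ := mul_le_mul_of_nonneg_right h2.le (norm_nonneg h)

theorem exists_local_sqrt (k nn : ℕ) (hn : 1 ≤ nn) :
    ∃ (g : Matrix (Fin k) (Fin k) ℝ → Matrix (Fin k) (Fin k) ℝ) (ε : ℝ), 0 < ε ∧
      ContDiffOn ℝ ((nn : ℕ∞) : WithTop ℕ∞) g (Metric.ball (1 : Matrix (Fin k) (Fin k) ℝ) ε) ∧
      ∀ Z ∈ Metric.ball (1 : Matrix (Fin k) (Fin k) ℝ) ε,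
        g Z * g Z = Z ∧ (Zᵀ = Z → (g Z)ᵀ = g Z) ∧ IsUnit (g Z).det := by
  haveI : CompleteSpace (Matrix (Fin k) (Fin k) ℝ) :=
    inferInstanceAs (CompleteSpace (Fin k → Fin k → ℝ))
  set M := Matrix (Fin k) (Fin k) ℝ
  have hn' : 1 ≤ ((nn : ℕ∞) : WithTop ℕ∞) := by exact_mod_cast hn
  have hsq : ContDiff ℝ ((nn : ℕ∞) : WithTop ℕ∞) (fun Y : M => Y * Y) := by
    rw [← contDiffOn_univ]
    exact cdMul contDiffOn_id contDiffOn_id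
  have hL := hasFDerivAt_sq k
  have hst : HasStrictFDerivAt (fun Y : M => Y * Y)
      (doubleCLE k : M →L[ℝ] M) 1 := hsq.contDiffAt.hasStrictFDerivAt' hL (zero_lt_one.trans_le hn').ne'
  set g : M → M := hst.localInverse _ _ _ with hg
  have g1 : g 1 = 1 := by simpa using hst.localInverse_apply_image
  have gcont : ContinuousAt g 1 := by
    have h := hst.localInverse_continuousAt; simp only [mul_one] at h; exact h
  have cdg : ContDiffAt ℝ ((nn : ℕ∞) : WithTop ℕ∞) g 1 := by
    have h := hsq.contDiffAt.to_localInverse hL (zero_lt_one.trans_le hn').ne'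
    simp only [mul_one] at h; exact h
  have hne : ((nn : ℕ∞) : WithTop ℕ∞) = ∞ → ((nn : ℕ∞) : WithTop ℕ∞) = ω := by
    intro h
    exfalso
    have h2 : (nn : ℕ∞) = ⊤ := by exact_mod_cast h
    simp at h2
  obtain ⟨u, uo, humem, cdu⟩ :=
    (cdg : ContDiffWithinAt ℝ ((nn : ℕ∞) : WithTop ℕ∞) g Set.univ 1).contDiffOn' le_rfl hne
  have ev_right : ∀ᶠ y in 𝓝 (1:M), (fun Y : M => Y * Y) (g y) = y := by
    have h := hst.eventually_right_inverse; simp only [mul_one] at h; exact h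
  have ev_left := hst.eventually_left_inverse
  rw [Metric.eventually_nhds_iff] at ev_left
  obtain ⟨ε₂, hε₂, hleft⟩ := ev_left
  have hdetc : Continuous (fun Z : M => Z.det) :=
    contDiff_zero.mp (contDiffOn_univ.mp (cdDet (n := 0) contDiffOn_id))
  have ev_det : ∀ᶠ Z in 𝓝 (1:M), Z.det ≠ 0 := by
    have h1 : (1:M).det ≠ (0:ℝ) := by simp
    exact hdetc.continuousAt.eventually_ne h1
  have ev_small : ∀ᶠ Z in 𝓝 (1:M), g Z ∈ Metric.ball (1:M) ε₂ := by
    have := gcont (Metric.ball_mem_nhds (g 1) hε₂)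
    rwa [g1] at this
  have ev_u : ∀ᶠ Z in 𝓝 (1:M), Z ∈ u := uo.eventually_mem humem
  have evAll := ev_right.and (ev_det.and (ev_small.and ev_u))
  obtain ⟨ε, hε, hall⟩ := Metric.eventually_nhds_iff.mp evAll
  refine ⟨g, ε, hε, ?_, ?_⟩
  · apply cdu.mono
    intro Z hZ
    rw [Metric.mem_ball] at hZ
    exact ⟨Set.mem_insert_iff.2 (Or.inr (Set.mem_univ Z)), (hall hZ).2.2.2⟩
  · intro Z hZ
    rw [Metric.mem_ball] at hZ
    obtain ⟨hsqZ0, hdetZ, hsmall, -⟩ := hall hZ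
    have hsqZ : g Z * g Z = Z := hsqZ0
    refine ⟨hsqZ, ?_, ?_⟩
    · intro hsymm
      have h1 : ((g Z)ᵀ) * ((g Z)ᵀ) = Z := by
        rw [← Matrix.transpose_mul]
        rw [hsqZ, hsymm]
      have hd : dist ((g Z)ᵀ) (1:M) < ε₂ := by
        rw [Metric.mem_ball] at hsmall
        rw [dist_eq_norm] at hsmall ⊢
        calc ‖(g Z)ᵀ - 1‖ = ‖((g Z) - 1)ᵀ‖ := by rw [Matrix.transpose_sub, Matrix.transpose_one]
          _ = ‖(g Z) - 1‖ := Matrix.norm_transpose _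
          _ < ε₂ := hsmall
      have h5 := hleft hd
      rw [h1] at h5
      exact h5.symm
    · have hdmul : (g Z).det * (g Z).det = Z.det := by
        rw [← Matrix.det_mul, hsqZ]
      rw [isUnit_iff_ne_zero]
      intro h0
      rw [h0, mul_zero] at hdmul
      exact hdetZ hdmul.symm

/-! ### Pointwise linear algebra -/

theorem mem_spectrum_iff_eigenvector {k : ℕ} (P : Matrix (Fin k) (Fin k) ℝ) (μ : ℝ) :
    μ ∈ spectrum ℝ P ↔ ∃ v, v ≠ 0 ∧ P *ᵥ v = μ • v := by
  have halg : (algebraMap ℝ (Matrix (Fin k) (Fin k) ℝ)) μ = μ • (1 : Matrix (Fin k) (Fin k) ℝ) :=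
    Algebra.algebraMap_eq_smul_one μ
  rw [spectrum.mem_iff, Matrix.isUnit_iff_isUnit_det, isUnit_iff_ne_zero, not_not,
    ← Matrix.exists_mulVec_eq_zero_iff, halg]
  constructor
  · rintro ⟨v, hv, hv0⟩
    refine ⟨v, hv, ?_⟩
    rw [Matrix.sub_mulVec, Matrix.smul_mulVec, Matrix.one_mulVec, sub_eq_zero] at hv0
    exact hv0.symm
  · rintro ⟨v, hv, hv0⟩
    exact ⟨v, hv, by
      rw [Matrix.sub_mulVec, Matrix.smul_mulVec, Matrix.one_mulVec, hv0, sub_self]⟩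

theorem quad_pos {k : ℕ} {a : Matrix (Fin k) (Fin k) ℝ} (hpsd : a.PosSemidef)
    (hdet : IsUnit a.det) {x : Fin k → ℝ} (hx : x ≠ 0) : 0 < x ⬝ᵥ (a *ᵥ x) := by
  obtain ⟨W, hW⟩ : ∃ W : Matrix (Fin k) (Fin k) ℝ, a = Wᴴ * W := by
    open scoped MatrixOrder in exact CStarAlgebra.nonneg_iff_eq_star_mul_self.mp hpsd.nonneg
  have key : x ⬝ᵥ (a *ᵥ x) = (W *ᵥ x) ⬝ᵥ (W *ᵥ x) := by
    rw [hW, ← Matrix.mulVec_mulVec, Matrix.dotProduct_mulVec]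
    congr 1
    rw [Matrix.conjTranspose_eq_transpose_of_trivial, Matrix.vecMul_transpose]
  have h0 : 0 ≤ (W *ᵥ x) ⬝ᵥ (W *ᵥ x) := Finset.sum_nonneg fun i _ => mul_self_nonneg _
  rw [key]
  rcases h0.lt_or_eq with h | h
  · exact h
  · exfalso
    have hWx : W *ᵥ x = 0 := dotProduct_self_eq_zero.mp h.symm
    have hax : a *ᵥ x = 0 := by rw [hW, ← Matrix.mulVec_mulVec, hWx, Matrix.mulVec_zero]
    apply hx
    calc x = (a⁻¹ * a) *ᵥ x := by rw [Matrix.nonsing_inv_mul _ hdet, Matrix.one_mulVec]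
      _ = a⁻¹ *ᵥ (a *ᵥ x) := by rw [Matrix.mulVec_mulVec]
      _ = 0 := by rw [hax, Matrix.mulVec_zero]

theorem schur_of_rank {r m : ℕ} (Q : Matrix (Fin r ⊕ Fin m) (Fin r ⊕ Fin m) ℝ)
    (hsym : Qᵀ = Q) (hdet : IsUnit (Q.toBlocks₁₁).det) (hrk : Q.rank = r) :
    Q = fromBlocks Q.toBlocks₁₁ (Q.toBlocks₁₁ * (Q.toBlocks₂₁ * Q.toBlocks₁₁⁻¹)ᵀ)
        (Q.toBlocks₂₁ * Q.toBlocks₁₁⁻¹ * Q.toBlocks₁₁)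
        (Q.toBlocks₂₁ * Q.toBlocks₁₁⁻¹ * Q.toBlocks₁₁ * (Q.toBlocks₂₁ * Q.toBlocks₁₁⁻¹)ᵀ) := by
  classical
  set a := Q.toBlocks₁₁ with ha'
  set b' := Q.toBlocks₁₂ with hb''
  set b := Q.toBlocks₂₁ with hbdef
  set c := Q.toBlocks₂₂ with hcdef
  have ha : aᵀ = a := by
    ext i j
    exact congrFun (congrFun hsym (Sum.inl i)) (Sum.inl j)
  have hb : b' = bᵀ := by
    ext i j
    exact (congrFun (congrFun hsym (Sum.inl i)) (Sum.inr j)).symm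
  have hQblocks : Q = fromBlocks a b' b c := (fromBlocks_toBlocks Q).symm
  have hXa : b * a⁻¹ * a = b := by
    rw [Matrix.mul_assoc, Matrix.nonsing_inv_mul a hdet, Matrix.mul_one]
  have hXt : (b * a⁻¹)ᵀ = a⁻¹ * b' := by
    rw [Matrix.transpose_mul, Matrix.transpose_nonsing_inv, ha, hb]
  set S := c - b * a⁻¹ * b' with hS
  have key : ∀ w : Fin r ⊕ Fin m → ℝ, Q *ᵥ w = 0 →
      (w ∘ Sum.inl = -(a⁻¹ *ᵥ (b' *ᵥ (w ∘ Sum.inr)))) ∧ S *ᵥ (w ∘ Sum.inr) = 0 := by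
    intro w hw
    set x := w ∘ Sum.inl with hxdef
    set y := w ∘ Sum.inr with hydef
    have hw' : Q *ᵥ (Sum.elim x y) = 0 := by rwa [hxdef, hydef, Sum.elim_comp_inl_inr w]
    rw [hQblocks, fromBlocks_mulVec] at hw'
    have top : a *ᵥ x + b' *ᵥ y = 0 := funext fun i => congrFun hw' (Sum.inl i)
    have bot : b *ᵥ x + c *ᵥ y = 0 := funext fun i => congrFun hw' (Sum.inr i)
    have hax : a *ᵥ x = -(b' *ᵥ y) := by rwa [add_eq_zero_iff_eq_neg] at top
    have hx : x = -(a⁻¹ *ᵥ (b' *ᵥ y)) := by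
      have h4 : a⁻¹ *ᵥ (a *ᵥ x) = x := by
        rw [Matrix.mulVec_mulVec, Matrix.nonsing_inv_mul a hdet, Matrix.one_mulVec]
      rw [← h4, hax, Matrix.mulVec_neg]
    refine ⟨hx, ?_⟩
    have h5 : S *ᵥ y = c *ᵥ y - (b * a⁻¹ * b') *ᵥ y := by rw [hS, Matrix.sub_mulVec]
    have h2 : (b * a⁻¹ * b') *ᵥ y = b *ᵥ (a⁻¹ *ᵥ (b' *ᵥ y)) := by
      rw [Matrix.mulVec_mulVec, Matrix.mulVec_mulVec]
    have h3 : a⁻¹ *ᵥ (b' *ᵥ y) = -x := by rw [hx]; simp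
    rw [h5, h2, h3, Matrix.mulVec_neg, sub_neg_eq_add, add_comm]
    exact bot
  have hrk' : Module.finrank ℝ (LinearMap.range Q.mulVecLin) = r := hrk
  have hdim : Module.finrank ℝ (LinearMap.ker Q.mulVecLin) = m := by
    have h1 := LinearMap.finrank_range_add_finrank_ker Q.mulVecLin
    rw [hrk', Module.finrank_fintype_fun_eq_card, Fintype.card_sum, Fintype.card_fin,
      Fintype.card_fin] at h1
    omega
  have hSker : LinearMap.ker (S.mulVecLin) = ⊤ := by
    set φ : ((Fin r ⊕ Fin m) → ℝ) →ₗ[ℝ] (Fin m → ℝ) := LinearMap.funLeft ℝ ℝ Sum.inr with hφ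
    have hmaps : ∀ w ∈ LinearMap.ker Q.mulVecLin, φ w ∈ LinearMap.ker S.mulVecLin := by
      intro w hw
      have hw' : Q *ᵥ w = 0 := hw
      exact LinearMap.mem_ker.2 ((key w hw').2)
    set ψ : (LinearMap.ker Q.mulVecLin) →ₗ[ℝ] (LinearMap.ker S.mulVecLin) :=
      (φ.comp (LinearMap.ker Q.mulVecLin).subtype).codRestrict _
        (fun w => hmaps w w.2) with hψ
    have hker0 : ∀ w, Q *ᵥ w = 0 → w ∘ Sum.inr = 0 → w = 0 := by
      intro w hw hy
      have hx := (key w hw).1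
      rw [hy] at hx
      simp only [Matrix.mulVec_zero, neg_zero] at hx
      funext u
      cases u with
      | inl i => exact congrFun hx i
      | inr j => exact congrFun hy j
    have hinj : Function.Injective ψ := by
      intro w1 w2 h12
      have hv : (w1 : (Fin r ⊕ Fin m) → ℝ) ∘ Sum.inr = (w2 : (Fin r ⊕ Fin m) → ℝ) ∘ Sum.inr :=
        congrArg Subtype.val h12
      have hsub : ((w1 : (Fin r ⊕ Fin m) → ℝ) - (w2 : (Fin r ⊕ Fin m) → ℝ)) = 0 := by
        apply hker0
        · have h1 : Q.mulVecLin ((w1 : (Fin r ⊕ Fin m) → ℝ) - w2) = 0 := by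
            rw [map_sub, LinearMap.mem_ker.1 w1.2, LinearMap.mem_ker.1 w2.2, sub_zero]
          exact h1
        · funext j
          have hj := congrFun hv j
          simp only [Function.comp_apply] at hj
          simp [hj]
      exact Subtype.ext (sub_eq_zero.mp hsub)
    have hle := LinearMap.finrank_le_finrank_of_injective hinj
    rw [hdim] at hle
    apply Submodule.eq_top_of_finrank_eq
    have h6 := Submodule.finrank_le (LinearMap.ker S.mulVecLin)
    rw [Module.finrank_fintype_fun_eq_card, Fintype.card_fin] at h6 ⊢
    omega
  have hS0 : S = 0 := by
    ext i j
    have h7 : S *ᵥ Pi.single j 1 = 0 :=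
      LinearMap.mem_ker.1 (hSker ▸ Submodule.mem_top)
    have h8 := congrFun h7 i
    simpa using h8
  have hc : c = b * a⁻¹ * b' := by
    have := sub_eq_zero.mp (hS ▸ hS0)
    exact this
  conv_lhs => rw [hQblocks]
  rw [hXa, hXt, ← Matrix.mul_assoc a a⁻¹ b', Matrix.mul_nonsing_inv a hdet, Matrix.one_mul,
    hc, Matrix.mul_assoc]

theorem posSemidef_toBlocks₁₁ {r m : ℕ} {Q : Matrix (Fin r ⊕ Fin m) (Fin r ⊕ Fin m) ℝ}
    (h : Q.PosSemidef) : (Q.toBlocks₁₁).PosSemidef := by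
  have h2 : Q.toBlocks₁₁ = Q.submatrix Sum.inl Sum.inl := rfl
  rw [h2]
  exact h.submatrix _

theorem pointwise_decomp {r m : ℕ} (Q : Matrix (Fin r ⊕ Fin m) (Fin r ⊕ Fin m) ℝ)
    (hPSD : Q.PosSemidef) (hrk : Q.rank = r) (hdet : IsUnit (Q.toBlocks₁₁).det)
    (c2 : Matrix (Fin r) (Fin r) ℝ) (d2 : Matrix (Fin m) (Fin m) ℝ)
    (hc2 : c2 * c2 = 1 + (Q.toBlocks₂₁ * (Q.toBlocks₁₁)⁻¹)ᵀ * (Q.toBlocks₂₁ * (Q.toBlocks₁₁)⁻¹))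
    (hc2t : c2ᵀ = c2) (hc2d : IsUnit c2.det)
    (hd2 : d2 * d2 = 1 + (Q.toBlocks₂₁ * (Q.toBlocks₁₁)⁻¹) * (Q.toBlocks₂₁ * (Q.toBlocks₁₁)⁻¹)ᵀ)
    (hd2t : d2ᵀ = d2) (hd2d : IsUnit d2.det) :
    (Matrix.fromBlocks c2⁻¹ (-(Q.toBlocks₂₁ * (Q.toBlocks₁₁)⁻¹)ᵀ * d2⁻¹)
        ((Q.toBlocks₂₁ * (Q.toBlocks₁₁)⁻¹) * c2⁻¹) d2⁻¹)ᵀ *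
      (Matrix.fromBlocks c2⁻¹ (-(Q.toBlocks₂₁ * (Q.toBlocks₁₁)⁻¹)ᵀ * d2⁻¹)
        ((Q.toBlocks₂₁ * (Q.toBlocks₁₁)⁻¹) * c2⁻¹) d2⁻¹) = 1 ∧
    Q = (Matrix.fromBlocks c2⁻¹ (-(Q.toBlocks₂₁ * (Q.toBlocks₁₁)⁻¹)ᵀ * d2⁻¹)
        ((Q.toBlocks₂₁ * (Q.toBlocks₁₁)⁻¹) * c2⁻¹) d2⁻¹) *
      Matrix.fromBlocks (c2 * Q.toBlocks₁₁ * c2) 0 0 0 *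
      (Matrix.fromBlocks c2⁻¹ (-(Q.toBlocks₂₁ * (Q.toBlocks₁₁)⁻¹)ᵀ * d2⁻¹)
        ((Q.toBlocks₂₁ * (Q.toBlocks₁₁)⁻¹) * c2⁻¹) d2⁻¹)ᵀ ∧
    (c2 * Q.toBlocks₁₁ * c2)ᵀ = c2 * Q.toBlocks₁₁ * c2 ∧
    (∀ μ ∈ spectrum ℝ (c2 * Q.toBlocks₁₁ * c2), 0 < μ) := by
  have hsym : Qᵀ = Q := by
    have h2 : Qᴴ = Q := hPSD.1
    rwa [Matrix.conjTranspose_eq_transpose_of_trivial] at h2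
  set a := Q.toBlocks₁₁ with hadef
  set X := Q.toBlocks₂₁ * a⁻¹ with hXdef
  set Mh := Matrix.fromBlocks c2⁻¹ (-Xᵀ * d2⁻¹) (X * c2⁻¹) d2⁻¹ with hMhdef
  set B := c2 * a * c2 with hBdef
  have hasym : aᵀ = a := by
    ext i j
    exact congrFun (congrFun hsym (Sum.inl i)) (Sum.inl j)
  have haPSD : a.PosSemidef := posSemidef_toBlocks₁₁ hPSD
  have hc2i : c2⁻¹ * c2 = 1 := Matrix.nonsing_inv_mul _ hc2d
  have hc2i' : c2 * c2⁻¹ = 1 := Matrix.mul_nonsing_inv _ hc2d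
  have hd2i : d2⁻¹ * d2 = 1 := Matrix.nonsing_inv_mul _ hd2d
  have hd2i' : d2 * d2⁻¹ = 1 := Matrix.mul_nonsing_inv _ hd2d
  have hc2it : (c2⁻¹)ᵀ = c2⁻¹ := by rw [Matrix.transpose_nonsing_inv, hc2t]
  have hd2it : (d2⁻¹)ᵀ = d2⁻¹ := by rw [Matrix.transpose_nonsing_inv, hd2t]
  have hccc : c2 * c2 * c2⁻¹ = c2 := by rw [Matrix.mul_assoc, hc2i', Matrix.mul_one]
  have hddd : d2 * d2 * d2⁻¹ = d2 := by rw [Matrix.mul_assoc, hd2i', Matrix.mul_one]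
  have hAb := schur_of_rank Q hsym hdet hrk
  rw [← hadef, ← hXdef] at hAb
  clear_value a X Mh B
  have hacg : a * c2⁻¹ + a * (Xᵀ * (X * c2⁻¹)) = a * c2 := by
    calc a * c2⁻¹ + a * (Xᵀ * (X * c2⁻¹))
        = a * (c2⁻¹ + Xᵀ * (X * c2⁻¹)) := by rw [Matrix.mul_add]
      _ = a * ((1 + Xᵀ * X) * c2⁻¹) := by rw [Matrix.add_mul, Matrix.one_mul, Matrix.mul_assoc]
      _ = a * (c2 * c2 * c2⁻¹) := by rw [← hc2]
      _ = a * c2 := by rw [hccc]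
  have hMtM : Mhᵀ * Mh = 1 := by
    rw [hMhdef, Matrix.fromBlocks_transpose, Matrix.fromBlocks_multiply,
      ← Matrix.fromBlocks_one (l := Fin r) (m := Fin m) (α := ℝ), Matrix.fromBlocks_inj]
    refine ⟨?_, ?_, ?_, ?_⟩
    · simp only [Matrix.transpose_mul, Matrix.transpose_neg, Matrix.transpose_transpose,
        hc2it, hd2it, Matrix.neg_mul, Matrix.mul_neg, neg_neg, Matrix.mul_assoc]
      calc c2⁻¹ * c2⁻¹ + c2⁻¹ * (Xᵀ * (X * c2⁻¹))
          = c2⁻¹ * (c2⁻¹ + Xᵀ * (X * c2⁻¹)) := by rw [Matrix.mul_add]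
        _ = c2⁻¹ * ((1 + Xᵀ * X) * c2⁻¹) := by rw [Matrix.add_mul, Matrix.one_mul, Matrix.mul_assoc]
        _ = c2⁻¹ * (c2 * c2 * c2⁻¹) := by rw [← hc2]
        _ = c2⁻¹ * c2 := by rw [hccc]
        _ = 1 := hc2i
    · simp only [Matrix.transpose_mul, Matrix.transpose_neg, Matrix.transpose_transpose,
        hc2it, hd2it, Matrix.neg_mul, Matrix.mul_neg, neg_neg, Matrix.mul_assoc]
      exact neg_add_cancel _
    · simp only [Matrix.transpose_mul, Matrix.transpose_neg, Matrix.transpose_transpose,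
        hc2it, hd2it, Matrix.neg_mul, Matrix.mul_neg, neg_neg, Matrix.mul_assoc]
      exact neg_add_cancel _
    · simp only [Matrix.transpose_mul, Matrix.transpose_neg, Matrix.transpose_transpose,
        hc2it, hd2it, Matrix.neg_mul, Matrix.mul_neg, neg_neg, Matrix.mul_assoc]
      calc d2⁻¹ * (X * (Xᵀ * d2⁻¹)) + d2⁻¹ * d2⁻¹
          = d2⁻¹ * (d2⁻¹ + X * (Xᵀ * d2⁻¹)) := by rw [Matrix.mul_add, add_comm]
        _ = d2⁻¹ * ((1 + X * Xᵀ) * d2⁻¹) := by rw [Matrix.add_mul, Matrix.one_mul, Matrix.mul_assoc]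
        _ = d2⁻¹ * (d2 * d2 * d2⁻¹) := by rw [← hd2]
        _ = d2⁻¹ * d2 := by rw [hddd]
        _ = 1 := hd2i
  have hAM : Q * Mh = Matrix.fromBlocks (a * c2) 0 (X * (a * c2)) 0 := by
    rw [hMhdef]
    conv_lhs => rw [hAb]
    rw [Matrix.fromBlocks_multiply, Matrix.fromBlocks_inj]
    refine ⟨?_, ?_, ?_, ?_⟩
    · simp only [Matrix.mul_assoc]
      exact hacg
    · simp only [Matrix.neg_mul, Matrix.mul_neg, Matrix.mul_assoc]
      exact neg_add_cancel _
    · simp only [Matrix.mul_assoc]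
      rw [← Matrix.mul_add]
      rw [show a * c2⁻¹ + a * (Xᵀ * (X * c2⁻¹)) = a * c2 from hacg]
    · simp only [Matrix.neg_mul, Matrix.mul_neg, Matrix.mul_assoc]
      exact neg_add_cancel _
  have hMB : Mh * Matrix.fromBlocks B 0 0 0 = Matrix.fromBlocks (a * c2) 0 (X * (a * c2)) 0 := by
    rw [hMhdef, Matrix.fromBlocks_multiply, Matrix.fromBlocks_inj]
    refine ⟨?_, ?_, ?_, ?_⟩
    · rw [Matrix.mul_zero, add_zero, hBdef, ← Matrix.mul_assoc, ← Matrix.mul_assoc, hc2i,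
        Matrix.one_mul]
    · simp
    · rw [Matrix.mul_zero, add_zero, hBdef, Matrix.mul_assoc X c2⁻¹,
        show c2⁻¹ * (c2 * a * c2) = a * c2 from by
          rw [Matrix.mul_assoc c2 a c2, ← Matrix.mul_assoc, hc2i, Matrix.one_mul]]
    · simp
  have hMMt : Mh * Mhᵀ = 1 := mul_eq_one_comm.mp hMtM
  have hdecomp : Q = Mh * Matrix.fromBlocks B 0 0 0 * Mhᵀ := by
    calc Q = Q * (Mh * Mhᵀ) := by rw [hMMt, Matrix.mul_one]
      _ = Q * Mh * Mhᵀ := by rw [Matrix.mul_assoc]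
      _ = Mh * Matrix.fromBlocks B 0 0 0 * Mhᵀ := by rw [hAM, hMB]
  have hBt : Bᵀ = B := by
    rw [hBdef]
    simp only [Matrix.transpose_mul, hc2t, hasym]
    rw [← Matrix.mul_assoc]
  have hspec : ∀ μ ∈ spectrum ℝ B, 0 < μ := by
    intro μ hμ
    obtain ⟨v, hv, hvec⟩ := (mem_spectrum_iff_eigenvector B μ).mp hμ
    have hc2v : c2 *ᵥ v ≠ 0 := by
      intro h0
      apply hv
      calc v = (c2⁻¹ * c2) *ᵥ v := by rw [hc2i, Matrix.one_mulVec]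
        _ = c2⁻¹ *ᵥ (c2 *ᵥ v) := by rw [Matrix.mulVec_mulVec]
        _ = 0 := by rw [h0, Matrix.mulVec_zero]
    have hquad : 0 < (c2 *ᵥ v) ⬝ᵥ (a *ᵥ (c2 *ᵥ v)) := quad_pos haPSD hdet hc2v
    have hdot : v ⬝ᵥ (B *ᵥ v) = (c2 *ᵥ v) ⬝ᵥ (a *ᵥ (c2 *ᵥ v)) := by
      rw [hBdef]
      have h1 : (c2 * a * c2) *ᵥ v = c2 *ᵥ (a *ᵥ (c2 *ᵥ v)) := by
        rw [Matrix.mulVec_mulVec, Matrix.mulVec_mulVec]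
      rw [h1, Matrix.dotProduct_mulVec]
      congr 1
      nth_rewrite 1 [← hc2t]
      exact Matrix.vecMul_transpose c2 v
    have hvv : 0 < v ⬝ᵥ v := by
      rcases (Finset.sum_nonneg fun i _ => mul_self_nonneg (v i) : (0:ℝ) ≤ v ⬝ᵥ v).lt_or_eq
        with h | h
      · exact h
      · exact absurd (dotProduct_self_eq_zero.mp h.symm) hv
    have hμv : v ⬝ᵥ (B *ᵥ v) = μ * (v ⬝ᵥ v) := by
      rw [hvec, dotProduct_smul, smul_eq_mul]
    have hpos : 0 < μ * (v ⬝ᵥ v) := by rw [← hμv, hdot]; exact hquad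
    nlinarith [hpos, hvv]
  exact ⟨hMtM, hdecomp, hBt, hspec⟩

set_option maxHeartbeats 1000000 in
theorem key_local {p d r m : ℕ} (s : ℕ) (hs : 1 ≤ s) (hm : r + m = d)
    (Θ : Set (EuclideanSpace ℝ (Fin p)))
    (A : EuclideanSpace ℝ (Fin p) → Matrix (Fin d) (Fin d) ℝ)
    (hA : ContDiffOn ℝ (s : ℕ∞) A Θ)
    (hpsd : ∀ θ ∈ Θ, (A θ).PosSemidef)
    (hrank : ∀ θ ∈ Θ, (A θ).rank = r)
    (lam llam : ℝ) (hlam : 0 < lam)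
    (heig : ∀ θ ∈ Θ, ∀ μ ∈ spectrum ℝ (A θ), μ ≠ 0 → lam ≤ μ ∧ μ ≤ llam)
    (θ₀ : EuclideanSpace ℝ (Fin p)) (hθ₀ : θ₀ ∈ Θ) :
    ∃ δ > (0:ℝ),
      ∃ (M : EuclideanSpace ℝ (Fin p) → Matrix (Fin d) (Fin d) ℝ)
        (B : EuclideanSpace ℝ (Fin p) → Matrix (Fin r) (Fin r) ℝ),
        ContDiffOn ℝ (s : ℕ∞) M {θ ∈ Θ | ‖θ - θ₀‖ ≤ δ} ∧
        ContDiffOn ℝ (s : ℕ∞) B {θ ∈ Θ | ‖θ - θ₀‖ ≤ δ} ∧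
        ∀ θ ∈ {θ ∈ Θ | ‖θ - θ₀‖ ≤ δ},
          M θ * (M θ)ᵀ = (1 : Matrix (Fin d) (Fin d) ℝ) ∧
          (B θ).IsSymm ∧
          (∀ μ ∈ spectrum ℝ (B θ), lam ≤ μ ∧ μ ≤ llam) ∧
          A θ = M θ *
            (Matrix.reindex (finSumFinEquiv.trans (finCongr hm))
              (finSumFinEquiv.trans (finCongr hm))
              (Matrix.fromBlocks (B θ) 0 0 (0 : Matrix (Fin m) (Fin m) ℝ))) * (M θ)ᵀ := by
  classical
  set e : Fin r ⊕ Fin m ≃ Fin d := finSumFinEquiv.trans (finCongr hm) with he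
  -- spectral data at θ₀
  have hH : (A θ₀).IsHermitian := (hpsd θ₀ hθ₀).1
  set ev : Fin d → ℝ := hH.eigenvalues with hev
  set V : Matrix (Fin d) (Fin d) ℝ := (hH.eigenvectorUnitary : Matrix (Fin d) (Fin d) ℝ) with hV
  have hVmem := (hH.eigenvectorUnitary).2
  have hVtV : Vᵀ * V = 1 := by
    have h := (Matrix.mem_unitaryGroup_iff').mp hVmem
    rwa [Matrix.star_eq_conjTranspose, Matrix.conjTranspose_eq_transpose_of_trivial] at h
  have hVVt : V * Vᵀ = 1 := by
    have h := (Matrix.mem_unitaryGroup_iff).mp hVmem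
    rwa [Matrix.star_eq_conjTranspose, Matrix.conjTranspose_eq_transpose_of_trivial] at h
  have hsp : A θ₀ = V * Matrix.diagonal ev * Vᵀ := by
    have h0 := hH.spectral_theorem
    rwa [Unitary.conjStarAlgAut_apply, Matrix.star_eq_conjTranspose,
      Matrix.conjTranspose_eq_transpose_of_trivial,
      show (RCLike.ofReal ∘ hH.eigenvalues : Fin d → ℝ) = ev from funext fun i => by
        simp [hev]] at h0
  have hcard : Fintype.card {i // ev i ≠ 0} = r := by
    rw [← hH.rank_eq_card_non_zero_eigs]
    exact hrank θ₀ hθ₀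
  have hcardc : Fintype.card {i // ¬ ev i ≠ 0} = m := by
    have h1 := Fintype.card_subtype_compl (fun i => ev i ≠ 0)
    rw [hcard, Fintype.card_fin] at h1
    omega
  set er : {i // ev i ≠ 0} ≃ Fin r := Fintype.equivFinOfCardEq hcard with her
  set em' : {i // ¬ ev i ≠ 0} ≃ Fin m := Fintype.equivFinOfCardEq hcardc with hem
  set π : Fin r ⊕ Fin m ≃ Fin d :=
    (Equiv.sumCongr er.symm em'.symm).trans (Equiv.sumCompl (fun i => ev i ≠ 0)) with hπ
  have hπl : ∀ i : Fin r, ev (π (Sum.inl i)) ≠ 0 := by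
    intro i
    have h1 : π (Sum.inl i) = ↑(er.symm i) := by simp [hπ]
    rw [h1]; exact (er.symm i).2
  have hπr : ∀ j : Fin m, ev (π (Sum.inr j)) = 0 := by
    intro j
    have h1 : π (Sum.inr j) = ↑(em'.symm j) := by simp [hπ]
    rw [h1]; exact not_not.mp (em'.symm j).2
  set σ : Fin d ≃ Fin d := e.symm.trans π with hσ
  set U : Matrix (Fin d) (Fin d) ℝ := V.submatrix id ⇑σ with hU
  have hUt : Uᵀ = Vᵀ.submatrix ⇑σ id := by rw [hU, Matrix.transpose_submatrix]
  have hconj : ∀ P : Matrix (Fin d) (Fin d) ℝ, Uᵀ * P * U = (Vᵀ * P * V).submatrix ⇑σ ⇑σ := by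
    intro P
    have h1 : (Vᵀ * P).submatrix ⇑σ id = Vᵀ.submatrix ⇑σ id * P.submatrix id id :=
      Matrix.submatrix_mul Vᵀ P ⇑σ id id Function.bijective_id
    have h2 : (Vᵀ * P * V).submatrix ⇑σ ⇑σ = (Vᵀ * P).submatrix ⇑σ id * V.submatrix id ⇑σ :=
      Matrix.submatrix_mul (Vᵀ * P) V ⇑σ id ⇑σ Function.bijective_id
    rw [h2, h1, Matrix.submatrix_id_id, hUt, hU]
  have hUtU : Uᵀ * U = 1 := by
    have h1 : (Vᵀ * V).submatrix ⇑σ ⇑σ = Vᵀ.submatrix ⇑σ id * V.submatrix id ⇑σ :=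
      Matrix.submatrix_mul Vᵀ V ⇑σ id ⇑σ Function.bijective_id
    rw [hUt, hU, ← h1, hVtV, Matrix.submatrix_one_equiv]
  have hUUt : U * Uᵀ = 1 := mul_eq_one_comm.mp hUtU
  have hUdet : IsUnit U.det := by
    apply IsUnit.of_mul_eq_one Uᵀ.det
    rw [← Matrix.det_mul, hUUt, Matrix.det_one]
  have hUtdet : IsUnit Uᵀ.det := by rw [Matrix.det_transpose]; exact hUdet
  -- local sqrts
  obtain ⟨gr, εr, hεr, cdgr, hgr⟩ := exists_local_sqrt r s hs
  obtain ⟨gm, εm, hεm, cdgm, hgm⟩ := exists_local_sqrt m s hs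
  -- the maps
  set Ahat : EuclideanSpace ℝ (Fin p) → Matrix (Fin r ⊕ Fin m) (Fin r ⊕ Fin m) ℝ :=
    fun θ => (Uᵀ * A θ * U).submatrix ⇑e ⇑e with hAhat
  set av : EuclideanSpace ℝ (Fin p) → Matrix (Fin r) (Fin r) ℝ :=
    fun θ => (Ahat θ).toBlocks₁₁ with hav
  set bv : EuclideanSpace ℝ (Fin p) → Matrix (Fin m) (Fin r) ℝ :=
    fun θ => (Ahat θ).toBlocks₂₁ with hbv
  set Xv : EuclideanSpace ℝ (Fin p) → Matrix (Fin m) (Fin r) ℝ :=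
    fun θ => bv θ * (av θ)⁻¹ with hXv
  set Gv : EuclideanSpace ℝ (Fin p) → Matrix (Fin r) (Fin r) ℝ :=
    fun θ => 1 + (Xv θ)ᵀ * Xv θ with hGv
  set Kv : EuclideanSpace ℝ (Fin p) → Matrix (Fin m) (Fin m) ℝ :=
    fun θ => 1 + Xv θ * (Xv θ)ᵀ with hKv
  set Bv : EuclideanSpace ℝ (Fin p) → Matrix (Fin r) (Fin r) ℝ :=
    fun θ => gr (Gv θ) * av θ * gr (Gv θ) with hBv
  set Mhat : EuclideanSpace ℝ (Fin p) → Matrix (Fin r ⊕ Fin m) (Fin r ⊕ Fin m) ℝ :=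
    fun θ => Matrix.fromBlocks ((gr (Gv θ))⁻¹) (-(Xv θ)ᵀ * (gm (Kv θ))⁻¹)
      (Xv θ * (gr (Gv θ))⁻¹) ((gm (Kv θ))⁻¹) with hMhat
  set Mv : EuclideanSpace ℝ (Fin p) → Matrix (Fin d) (Fin d) ℝ :=
    fun θ => U * (Mhat θ).submatrix ⇑e.symm ⇑e.symm with hMv
  -- values at θ₀
  have hAhat0 : Ahat θ₀ = Matrix.diagonal (fun u => ev (π u)) := by
    have h3 : Vᵀ * A θ₀ * V = Matrix.diagonal ev := by
      rw [hsp]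
      have h4 : Vᵀ * (V * Matrix.diagonal ev * Vᵀ) * V
          = (Vᵀ * V) * Matrix.diagonal ev * (Vᵀ * V) := by
        simp only [Matrix.mul_assoc]
      rw [h4, hVtV, Matrix.one_mul, Matrix.mul_one]
    show (Uᵀ * A θ₀ * U).submatrix ⇑e ⇑e = _
    have hfun : ((ev ∘ ⇑σ) ∘ ⇑e) = fun u => ev (π u) := by
      funext u
      simp [hσ, Function.comp]
    rw [hconj (A θ₀), h3, Matrix.submatrix_diagonal_equiv, Matrix.submatrix_diagonal_equiv, hfun]
  have hav0 : av θ₀ = Matrix.diagonal (fun i => ev (π (Sum.inl i))) := by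
    show (Ahat θ₀).toBlocks₁₁ = _
    rw [hAhat0]
    ext i j
    by_cases hij : i = j
    · subst hij
      simp [Matrix.toBlocks₁₁]
    · have hne : (Sum.inl i : Fin r ⊕ Fin m) ≠ Sum.inl j := fun h => hij (Sum.inl_injective h)
      simp [Matrix.toBlocks₁₁, Matrix.diagonal_apply_ne _ hne, Matrix.diagonal_apply_ne _ hij]
  have hdet0 : (av θ₀).det ≠ 0 := by
    rw [hav0, Matrix.det_diagonal]
    exact Finset.prod_ne_zero_iff.mpr fun i _ => hπl i
  have hbv0 : bv θ₀ = 0 := by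
    show (Ahat θ₀).toBlocks₂₁ = 0
    rw [hAhat0]
    ext i j
    have hne : (Sum.inr i : Fin r ⊕ Fin m) ≠ Sum.inl j := by simp
    simp [Matrix.toBlocks₂₁, Matrix.diagonal_apply_ne _ hne]
  have hXv0 : Xv θ₀ = 0 := by
    show bv θ₀ * (av θ₀)⁻¹ = 0
    rw [hbv0, Matrix.zero_mul]
  have hGv0 : Gv θ₀ = 1 := by
    show 1 + (Xv θ₀)ᵀ * Xv θ₀ = 1
    rw [hXv0]
    simp
  have hKv0 : Kv θ₀ = 1 := by
    show 1 + Xv θ₀ * (Xv θ₀)ᵀ = 1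
    rw [hXv0]
    simp
  -- smoothness of building blocks
  have cdAhat : ∀ {S : Set (EuclideanSpace ℝ (Fin p))}, S ⊆ Θ →
      ContDiffOn ℝ (s:ℕ∞) Ahat S := by
    intro S hS
    apply cdMat
    intro i j
    exact cdEntry (cdMul (cdMul contDiffOn_const (hA.mono hS)) contDiffOn_const) (e i) (e j)
  have cdav : ∀ {S : Set (EuclideanSpace ℝ (Fin p))}, S ⊆ Θ →
      ContDiffOn ℝ (s:ℕ∞) av S := fun hS =>
    cdMat fun i j => cdEntry (cdAhat hS) (Sum.inl i) (Sum.inl j)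
  have cdbv : ∀ {S : Set (EuclideanSpace ℝ (Fin p))}, S ⊆ Θ →
      ContDiffOn ℝ (s:ℕ∞) bv S := fun hS =>
    cdMat fun i j => cdEntry (cdAhat hS) (Sum.inr i) (Sum.inl j)
  -- eventual conditions near θ₀ within Θ
  have cdetav : ContinuousOn (fun θ => (av θ).det) Θ :=
    (cdDet (cdav (subset_refl Θ))).continuousOn
  have ev_det : ∀ᶠ θ in 𝓝[Θ] θ₀, (av θ).det ≠ 0 :=
    (cdetav θ₀ hθ₀).eventually (isOpen_ne.eventually_mem hdet0)
  set Θ₂ : Set (EuclideanSpace ℝ (Fin p)) := {θ ∈ Θ | (av θ).det ≠ 0} with hΘ₂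
  have hΘ₂sub : Θ₂ ⊆ Θ := fun θ h => h.1
  have hθ₀Θ₂ : θ₀ ∈ Θ₂ := ⟨hθ₀, hdet0⟩
  have cdXΘ₂ : ContDiffOn ℝ (s:ℕ∞) Xv Θ₂ :=
    cdMul (cdbv hΘ₂sub) (cdInv (cdav hΘ₂sub) fun θ hθ => isUnit_iff_ne_zero.mpr hθ.2)
  have cdGΘ₂ : ContDiffOn ℝ (s:ℕ∞) Gv Θ₂ :=
    cdAdd contDiffOn_const (cdMul (cdTranspose cdXΘ₂) cdXΘ₂)
  have cdKΘ₂ : ContDiffOn ℝ (s:ℕ∞) Kv Θ₂ :=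
    cdAdd contDiffOn_const (cdMul cdXΘ₂ (cdTranspose cdXΘ₂))
  have ev_G : ∀ᶠ θ in 𝓝[Θ₂] θ₀, Gv θ ∈ Metric.ball (1:Matrix (Fin r) (Fin r) ℝ) εr := by
    apply (cdGΘ₂.continuousOn θ₀ hθ₀Θ₂).eventually
    apply Metric.isOpen_ball.eventually_mem
    rw [hGv0]
    exact Metric.mem_ball_self hεr
  have ev_K : ∀ᶠ θ in 𝓝[Θ₂] θ₀, Kv θ ∈ Metric.ball (1:Matrix (Fin m) (Fin m) ℝ) εm := by
    apply (cdKΘ₂.continuousOn θ₀ hθ₀Θ₂).eventually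
    apply Metric.isOpen_ball.eventually_mem
    rw [hKv0]
    exact Metric.mem_ball_self hεm
  obtain ⟨O₀, hO₀o, hθO₀, hO₀⟩ := mem_nhdsWithin.mp ev_det
  obtain ⟨O₁, hO₁o, hθO₁, hO₁⟩ := mem_nhdsWithin.mp ev_G
  obtain ⟨O₂, hO₂o, hθO₂, hO₂⟩ := mem_nhdsWithin.mp ev_K
  obtain ⟨δ', hδ'pos, hδ'ball⟩ :=
    Metric.isOpen_iff.mp (hO₀o.inter (hO₁o.inter hO₂o)) θ₀ ⟨hθO₀, hθO₁, hθO₂⟩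
  have hgood : ∀ θ ∈ {θ ∈ Θ | ‖θ - θ₀‖ ≤ δ'/2}, θ ∈ Θ ∧ (av θ).det ≠ 0 ∧
      Gv θ ∈ Metric.ball (1:Matrix (Fin r) (Fin r) ℝ) εr ∧
      Kv θ ∈ Metric.ball (1:Matrix (Fin m) (Fin m) ℝ) εm := by
    intro θ hθ
    have hθΘ : θ ∈ Θ := hθ.1
    have hball : θ ∈ Metric.ball θ₀ δ' := by
      rw [Metric.mem_ball, dist_eq_norm]
      have h1 : ‖θ - θ₀‖ ≤ δ'/2 := hθ.2
      linarith
    have hO := hδ'ball hball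
    have h0 : (av θ).det ≠ 0 := hO₀ ⟨hO.1, hθΘ⟩
    have hθΘ₂ : θ ∈ Θ₂ := ⟨hθΘ, h0⟩
    exact ⟨hθΘ, h0, hO₁ ⟨hO.2.1, hθΘ₂⟩, hO₂ ⟨hO.2.2, hθΘ₂⟩⟩
  have hSΘ₂ : {θ ∈ Θ | ‖θ - θ₀‖ ≤ δ'/2} ⊆ Θ₂ :=
    fun θ hθ => ⟨(hgood θ hθ).1, (hgood θ hθ).2.1⟩
  have hSΘ : {θ ∈ Θ | ‖θ - θ₀‖ ≤ δ'/2} ⊆ Θ := fun θ hθ => hθ.1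
  have cdXS := cdXΘ₂.mono hSΘ₂
  have cdGS := cdGΘ₂.mono hSΘ₂
  have cdKS := cdKΘ₂.mono hSΘ₂
  have cdgrG : ContDiffOn ℝ (s:ℕ∞) (fun θ => gr (Gv θ)) {θ ∈ Θ | ‖θ - θ₀‖ ≤ δ'/2} :=
    cdgr.comp cdGS (fun θ hθ => (hgood θ hθ).2.2.1)
  have cdgmK : ContDiffOn ℝ (s:ℕ∞) (fun θ => gm (Kv θ)) {θ ∈ Θ | ‖θ - θ₀‖ ≤ δ'/2} :=
    cdgm.comp cdKS (fun θ hθ => (hgood θ hθ).2.2.2)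
  have cdC : ContDiffOn ℝ (s:ℕ∞) (fun θ => (gr (Gv θ))⁻¹) {θ ∈ Θ | ‖θ - θ₀‖ ≤ δ'/2} :=
    cdInv cdgrG (fun θ hθ => (hgr _ ((hgood θ hθ).2.2.1)).2.2)
  have cdD : ContDiffOn ℝ (s:ℕ∞) (fun θ => (gm (Kv θ))⁻¹) {θ ∈ Θ | ‖θ - θ₀‖ ≤ δ'/2} :=
    cdInv cdgmK (fun θ hθ => (hgm _ ((hgood θ hθ).2.2.2)).2.2)
  have cdMhatS : ContDiffOn ℝ (s:ℕ∞) Mhat {θ ∈ Θ | ‖θ - θ₀‖ ≤ δ'/2} := by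
    apply cdMat
    rintro (i | i) (j | j)
    · exact cdEntry cdC i j
    · exact cdEntry (cdMul (cdNeg (cdTranspose cdXS)) cdD) i j
    · exact cdEntry (cdMul cdXS cdC) i j
    · exact cdEntry cdD i j
  have cdMvS : ContDiffOn ℝ (s:ℕ∞) Mv {θ ∈ Θ | ‖θ - θ₀‖ ≤ δ'/2} :=
  cdMul contDiffOn_const (cdMat fun i j => cdEntry cdMhatS (e.symm i) (e.symm j))
  have cdBvS : ContDiffOn ℝ (s:ℕ∞) Bv {θ ∈ Θ | ‖θ - θ₀‖ ≤ δ'/2} :=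
  cdMul (cdMul cdgrG (cdav hSΘ)) cdgrG
  refine ⟨δ'/2, by linarith, Mv, Bv, cdMvS, cdBvS, ?_⟩
  intro θ hθS
  obtain ⟨hθΘ, hdetne, hGball, hKball⟩ := hgood θ hθS
  have hdetu : IsUnit ((Ahat θ).toBlocks₁₁).det := isUnit_iff_ne_zero.mpr hdetne
  obtain ⟨hc2sq, hc2symm', hc2u⟩ := hgr _ hGball
  obtain ⟨hd2sq, hd2symm', hd2u⟩ := hgm _ hKball
  have hGt : (Gv θ)ᵀ = Gv θ := by
    show (1 + (Xv θ)ᵀ * Xv θ : Matrix (Fin r) (Fin r) ℝ)ᵀ = 1 + (Xv θ)ᵀ * Xv θ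
    rw [Matrix.transpose_add, Matrix.transpose_one, Matrix.transpose_mul,
      Matrix.transpose_transpose]
  have hKt : (Kv θ)ᵀ = Kv θ := by
    show (1 + Xv θ * (Xv θ)ᵀ : Matrix (Fin m) (Fin m) ℝ)ᵀ = 1 + Xv θ * (Xv θ)ᵀ
    rw [Matrix.transpose_add, Matrix.transpose_one, Matrix.transpose_mul,
      Matrix.transpose_transpose]
  have hc2t : (gr (Gv θ))ᵀ = gr (Gv θ) := hc2symm' hGt
  have hd2t : (gm (Kv θ))ᵀ = gm (Kv θ) := hd2symm' hKt
  have hAhatPSD : (Ahat θ).PosSemidef := by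
    have h1 : (Uᵀ * A θ * U).PosSemidef := by
      have h2 := (hpsd θ hθΘ).mul_mul_conjTranspose_same Uᵀ
      rwa [Matrix.conjTranspose_eq_transpose_of_trivial, Matrix.transpose_transpose] at h2
    exact h1.submatrix ⇑e
  have hrkθ : (Ahat θ).rank = r := by
    have h1 : (Uᵀ * A θ * U).rank = r := by
      rw [Matrix.mul_assoc, Matrix.rank_mul_eq_right_of_isUnit_det Uᵀ (A θ * U) hUtdet,
        Matrix.rank_mul_eq_left_of_isUnit_det U (A θ) hUdet]
      exact hrank θ hθΘ
    have h2 : (Ahat θ).rank = (Uᵀ * A θ * U).rank := Matrix.rank_submatrix _ e e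
    rw [h2, h1]
  obtain ⟨hOrtho, hDecomp, hBsym, hBpos⟩ :=
    pointwise_decomp (Ahat θ) hAhatPSD hrkθ hdetu (gr (Gv θ)) (gm (Kv θ))
      hc2sq hc2t hc2u hd2sq hd2t hd2u
  -- orthogonality of Mhat θ
  have hMhatOrtho : (Mhat θ)ᵀ * Mhat θ = 1 := hOrtho
  have hMhatOrtho' : Mhat θ * (Mhat θ)ᵀ = 1 := mul_eq_one_comm.mp hMhatOrtho
  have hDecomp' : Ahat θ = Mhat θ * Matrix.fromBlocks (Bv θ) 0 0 0 * (Mhat θ)ᵀ := hDecomp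
  -- M θ orthogonal
  have hsubMM : (Mhat θ).submatrix ⇑e.symm ⇑e.symm * ((Mhat θ)ᵀ).submatrix ⇑e.symm ⇑e.symm
      = 1 := by
    rw [Matrix.submatrix_mul_equiv, hMhatOrtho', Matrix.submatrix_one_equiv]
  have hMvT : (Mv θ)ᵀ = ((Mhat θ)ᵀ).submatrix ⇑e.symm ⇑e.symm * Uᵀ := by
    show (U * (Mhat θ).submatrix ⇑e.symm ⇑e.symm)ᵀ = _
    rw [Matrix.transpose_mul, Matrix.transpose_submatrix]
  have hMMt : Mv θ * (Mv θ)ᵀ = 1 := by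
    show (U * (Mhat θ).submatrix ⇑e.symm ⇑e.symm) * (Mv θ)ᵀ = 1
    rw [hMvT, Matrix.mul_assoc U _ _,
      ← Matrix.mul_assoc ((Mhat θ).submatrix ⇑e.symm ⇑e.symm) _ _, hsubMM, Matrix.one_mul,
      hUUt]
  -- decomposition of A θ
  have hAhat_eq : (Ahat θ).submatrix ⇑e.symm ⇑e.symm = Uᵀ * A θ * U := by
    show ((Uᵀ * A θ * U).submatrix ⇑e ⇑e).submatrix ⇑e.symm ⇑e.symm = _
    rw [Matrix.submatrix_submatrix,
      show (⇑e ∘ ⇑e.symm : Fin d → Fin d) = id from funext fun x => e.apply_symm_apply x,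
      Matrix.submatrix_id_id]
  have hS : (Mhat θ).submatrix ⇑e.symm ⇑e.symm *
      ((Matrix.fromBlocks (Bv θ) 0 0 (0 : Matrix (Fin m) (Fin m) ℝ)).submatrix ⇑e.symm ⇑e.symm *
        ((Mhat θ)ᵀ).submatrix ⇑e.symm ⇑e.symm) = Uᵀ * A θ * U := by
    rw [Matrix.submatrix_mul_equiv, Matrix.submatrix_mul_equiv, ← Matrix.mul_assoc,
      ← hDecomp']
    exact hAhat_eq
  have hAform : A θ = Mv θ *
      (Matrix.reindex e e (Matrix.fromBlocks (Bv θ) 0 0 (0 : Matrix (Fin m) (Fin m) ℝ))) *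
      (Mv θ)ᵀ := by
    rw [Matrix.reindex_apply, hMvT]
    show A θ = (U * (Mhat θ).submatrix ⇑e.symm ⇑e.symm) * _ * _
    have hshuffle : (U * (Mhat θ).submatrix ⇑e.symm ⇑e.symm) *
        ((Matrix.fromBlocks (Bv θ) 0 0 (0:Matrix (Fin m) (Fin m) ℝ)).submatrix ⇑e.symm ⇑e.symm) *
        (((Mhat θ)ᵀ).submatrix ⇑e.symm ⇑e.symm * Uᵀ)
        = U * ((Mhat θ).submatrix ⇑e.symm ⇑e.symm *
          ((Matrix.fromBlocks (Bv θ) 0 0 (0:Matrix (Fin m) (Fin m) ℝ)).submatrix ⇑e.symm ⇑e.symm *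
            ((Mhat θ)ᵀ).submatrix ⇑e.symm ⇑e.symm)) * Uᵀ := by
      simp only [Matrix.mul_assoc]
    rw [hshuffle, hS]
    have hfin : U * (Uᵀ * A θ * U) * Uᵀ = A θ := by
      have h9 : U * (Uᵀ * A θ * U) * Uᵀ = (U * Uᵀ) * A θ * (U * Uᵀ) := by
        simp only [Matrix.mul_assoc]
      rw [h9, hUUt, Matrix.one_mul, Matrix.mul_one]
    rw [hfin]
  refine ⟨hMMt, ?_, ?_, ?_⟩
  · show (Bv θ)ᵀ = Bv θ
    exact hBsym
  · -- spectrum bounds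
    intro μ hμ
    have hμpos : 0 < μ := hBpos μ hμ
    obtain ⟨v, hv, hvec⟩ := (mem_spectrum_iff_eigenvector (Bv θ) μ).mp hμ
    set z : Fin d → ℝ := (Sum.elim v 0) ∘ ⇑e.symm with hz
    have hze : z ∘ ⇑e = Sum.elim v 0 := by
      funext u
      simp [hz]
    have hzne : z ≠ 0 := by
      obtain ⟨i, hi⟩ := Function.ne_iff.mp hv
      intro h0
      apply hi
      have h1 := congrFun h0 (e (Sum.inl i))
      simpa [hz] using h1
    have hMtMv : (Mv θ)ᵀ * Mv θ = 1 := mul_eq_one_comm.mp hMMt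
    have hMvw : (Mv θ)ᵀ *ᵥ (Mv θ *ᵥ z) = z := by
      rw [Matrix.mulVec_mulVec, hMtMv, Matrix.one_mulVec]
    have hRz : (Matrix.reindex e e
        (Matrix.fromBlocks (Bv θ) 0 0 (0 : Matrix (Fin m) (Fin m) ℝ))) *ᵥ z = μ • z := by
      rw [Matrix.reindex_apply, Matrix.submatrix_mulVec_equiv, Equiv.symm_symm, hze,
        Matrix.fromBlocks_mulVec]
      simp only [Sum.elim_comp_inl, Sum.elim_comp_inr, Matrix.zero_mulVec, Matrix.mulVec_zero,
        add_zero, zero_add]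
      rw [hvec]
      have h1 : Sum.elim (μ • v) (0 : Fin m → ℝ) = μ • Sum.elim v (0 : Fin m → ℝ) := by
        funext u
        cases u <;> simp
      rw [h1]
      funext x
      simp [hz]
    have hAz : A θ *ᵥ (Mv θ *ᵥ z) = μ • (Mv θ *ᵥ z) := by
      conv_lhs => rw [hAform]
      rw [← Matrix.mulVec_mulVec, hMvw, ← Matrix.mulVec_mulVec, hRz, Matrix.mulVec_smul]
    have hwne : Mv θ *ᵥ z ≠ 0 := by
      intro h0
      apply hzne
      rw [← hMvw, h0, Matrix.mulVec_zero]
    have hμspec : μ ∈ spectrum ℝ (A θ) :=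
      (mem_spectrum_iff_eigenvector (A θ) μ).mpr ⟨Mv θ *ᵥ z, hwne, hAz⟩
    exact heig θ hθΘ μ hμspec (ne_of_gt hμpos)
  · exact hAform

end BlockDecompAux

/-- **Local smooth block decomposition of a constant-rank positive semidefinite matrix map.**
If `A` is `s`-times continuously differentiable on a convex compact `Θ ⊆ ℝ^p`, positive
semidefinite valued with constant rank `r` (`1 ≤ r ≤ d`, `m = d - r` so `r + m = d`), and all
nonzero eigenvalues of `A θ` lie in `[lam, llam]` with `0 < lam ≤ llam`, then there is a `δ > 0`
such that around every `θ₀ ∈ Θ` there are `s`-times continuously differentiable maps `M` (d×d,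
orthogonal) and `B` (r×r, symmetric with eigenvalues in `[lamB, llamB]`, `0 < lamB ≤ llamB`)
with `A θ = M θ * blockdiag[B θ, 0] * (M θ)ᵀ`. -/
theorem matrix_local_block_decomposition_of_constant_rank
    {p d r m : ℕ} (s : ℕ) (hs : 1 ≤ s) (hm : r + m = d)
    (Θ : Set (EuclideanSpace ℝ (Fin p)))
    (hconv : Convex ℝ Θ) (hcomp : IsCompact Θ)
    (A : EuclideanSpace ℝ (Fin p) → Matrix (Fin d) (Fin d) ℝ)
    (hA : ContDiffOn ℝ (s : ℕ∞) A Θ)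
    (hpsd : ∀ θ ∈ Θ, (A θ).PosSemidef)
    (hr : 1 ≤ r) (hrd : r ≤ d)
    (hrank : ∀ θ ∈ Θ, (A θ).rank = r)
    (lam llam : ℝ) (hlam : 0 < lam) (hll : lam ≤ llam)
    (heig : ∀ θ ∈ Θ, ∀ μ ∈ spectrum ℝ (A θ), μ ≠ 0 → lam ≤ μ ∧ μ ≤ llam) :
    ∃ δ > (0 : ℝ), ∀ θ₀ ∈ Θ,
      ∃ (M : EuclideanSpace ℝ (Fin p) → Matrix (Fin d) (Fin d) ℝ)
        (B : EuclideanSpace ℝ (Fin p) → Matrix (Fin r) (Fin r) ℝ)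
        (lamB llamB : ℝ),
        0 < lamB ∧ lamB ≤ llamB ∧
        ContDiffOn ℝ (s : ℕ∞) M {θ ∈ Θ | ‖θ - θ₀‖ ≤ δ} ∧
        ContDiffOn ℝ (s : ℕ∞) B {θ ∈ Θ | ‖θ - θ₀‖ ≤ δ} ∧
        ∀ θ ∈ {θ ∈ Θ | ‖θ - θ₀‖ ≤ δ},
          M θ * (M θ)ᵀ = (1 : Matrix (Fin d) (Fin d) ℝ) ∧
          (B θ).IsSymm ∧
          (∀ μ ∈ spectrum ℝ (B θ), lamB ≤ μ ∧ μ ≤ llamB) ∧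
          A θ = M θ *
            (Matrix.reindex (finSumFinEquiv.trans (finCongr hm))
              (finSumFinEquiv.trans (finCongr hm))
              (Matrix.fromBlocks (B θ) 0 0 (0 : Matrix (Fin m) (Fin m) ℝ))) * (M θ)ᵀ := by
  classical
  by_cases hempty : Θ = ∅
  · refine ⟨1, one_pos, ?_⟩
    intro θ₀ hθ₀
    rw [hempty] at hθ₀
    exact absurd hθ₀ (Set.notMem_empty θ₀)
  have key := fun θ₀ (hθ₀ : θ₀ ∈ Θ) =>
    BlockDecompAux.key_local s hs hm Θ A hA hpsd hrank lam llam hlam heig θ₀ hθ₀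
  choose! δf hδf Mf Bf hMf hBf hprop using key
  have hcover : ∀ x ∈ Θ, Metric.ball x (δf x / 2) ∈ 𝓝 x := by
    intro x hx
    have := hδf x hx
    exact Metric.ball_mem_nhds _ (by linarith)
  obtain ⟨t, htΘ, hcov⟩ := hcomp.elim_nhds_subcover (fun x => Metric.ball x (δf x / 2)) hcover
  have htne : t.Nonempty := by
    by_contra ht
    obtain ⟨x, hx⟩ := Set.nonempty_iff_ne_empty.mpr hempty
    have hmem := hcov hx
    rw [Finset.not_nonempty_iff_eq_empty.mp ht] at hmem
    simpa using hmem
  set δ := t.inf' htne (fun x => δf x / 2) with hδdef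
  have hδpos : 0 < δ := by
    rw [hδdef, Finset.lt_inf'_iff]
    intro x hx
    have := hδf x (htΘ x hx)
    linarith
  refine ⟨δ, hδpos, ?_⟩
  intro θ₀ hθ₀
  obtain ⟨x, hxt, hx⟩ := Set.mem_iUnion₂.mp (hcov hθ₀)
  have hxΘ : x ∈ Θ := htΘ x hxt
  have hsub : {θ ∈ Θ | ‖θ - θ₀‖ ≤ δ} ⊆ {θ ∈ Θ | ‖θ - x‖ ≤ δf x} := by
    intro θ hθ
    refine ⟨hθ.1, ?_⟩
    have h1 : ‖θ - θ₀‖ ≤ δ := hθ.2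
    have h2 : ‖θ₀ - x‖ < δf x / 2 := by
      rw [← dist_eq_norm]
      exact Metric.mem_ball.mp hx
    have h3 : δ ≤ δf x / 2 := Finset.inf'_le _ hxt
    calc ‖θ - x‖ ≤ ‖θ - θ₀‖ + ‖θ₀ - x‖ := norm_sub_le_norm_sub_add_norm_sub θ θ₀ x
      _ ≤ δf x := by linarith
  exact ⟨Mf x, Bf x, lam, llam, hlam, hll, (hMf x hxΘ).mono hsub, (hBf x hxΘ).mono hsub,
    fun θ hθ => hprop x hxΘ θ (hsub hθ)⟩
end

section
/- Let Θ ⊂ ℝ^p be compact and let A, C, K be continuous maps from Θ to real matrices of sizes d×m, m×m, and m×d respectively. Suppose that for every θ ∈ Θ and every complex z with |z| ≤ 1, det(I_m − z·C(θ)) ≠ 0 (the determinant taken of the complex matrix obtained from the real matrix C(θ)). Then there exist M ≥ 0 and ρ ∈ [0,1) such that for every θ ∈ Θ and every j ∈ ℕ, ‖A(θ)·C(θ)^j·K(θ)‖_op ≤ M·ρ^j; in particular, the series ∑_{j=0}^∞ sup_{θ∈Θ} ‖A(θ)·C(θ)^j·K(θ)‖_op converges. -/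
/-- The operator (spectral) norm of a real matrix, i.e. the operator norm of the induced
linear map between Euclidean spaces. -/
noncomputable def opNorm {m n : ℕ} (A : Matrix (Fin m) (Fin n) ℝ) : ℝ :=
  ‖LinearMap.toContinuousLinearMap (Matrix.toEuclideanLin A)‖

noncomputable def opNormC {m n : ℕ} (A : Matrix (Fin m) (Fin n) ℂ) : ℝ :=
  ‖LinearMap.toContinuousLinearMap (Matrix.toEuclideanLin A)‖

open scoped Matrix.Norms.L2Operator in
lemma opNorm_eq_l2 {a b : ℕ} (X : Matrix (Fin a) (Fin b) ℝ) : opNorm X = ‖X‖ := rfl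

open scoped Matrix.Norms.L2Operator in
lemma opNormC_eq_l2 {a b : ℕ} (X : Matrix (Fin a) (Fin b) ℂ) : opNormC X = ‖X‖ := rfl

lemma opNorm_nonneg {a b : ℕ} (X : Matrix (Fin a) (Fin b) ℝ) : 0 ≤ opNorm X := norm_nonneg _
lemma opNormC_nonneg {a b : ℕ} (X : Matrix (Fin a) (Fin b) ℂ) : 0 ≤ opNormC X := norm_nonneg _

open scoped Matrix.Norms.L2Operator in
lemma opNorm_mul_le {a b c : ℕ} (X : Matrix (Fin a) (Fin b) ℝ) (Y : Matrix (Fin b) (Fin c) ℝ) :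
    opNorm (X * Y) ≤ opNorm X * opNorm Y := Matrix.l2_opNorm_mul X Y

open scoped Matrix.Norms.L2Operator in
lemma opNormC_mul_le {a b c : ℕ} (X : Matrix (Fin a) (Fin b) ℂ) (Y : Matrix (Fin b) (Fin c) ℂ) :
    opNormC (X * Y) ≤ opNormC X * opNormC Y := Matrix.l2_opNorm_mul X Y

lemma continuous_opNorm {a b : ℕ} : Continuous (opNorm (m := a) (n := b)) := by
  have h : Continuous fun X : Matrix (Fin a) (Fin b) ℝ =>
      LinearMap.toContinuousLinearMap (Matrix.toEuclideanLin X) :=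
    LinearMap.continuous_of_finiteDimensional
      (((Matrix.toEuclideanLin (𝕜 := ℝ) (m := Fin a) (n := Fin b)).trans
        LinearMap.toContinuousLinearMap).toLinearMap)
  exact continuous_norm.comp h

lemma continuous_opNormC {a b : ℕ} : Continuous (opNormC (m := a) (n := b)) := by
  have h : Continuous fun X : Matrix (Fin a) (Fin b) ℂ =>
      LinearMap.toContinuousLinearMap (Matrix.toEuclideanLin X) :=
    LinearMap.continuous_of_finiteDimensional
      (((Matrix.toEuclideanLin (𝕜 := ℂ) (m := Fin a) (n := Fin b)).trans
        LinearMap.toContinuousLinearMap).toLinearMap)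
  exact continuous_norm.comp h

open scoped Matrix.Norms.L2Operator in
open Matrix in
lemma opNorm_le_map_ofReal {a b : ℕ} (X : Matrix (Fin a) (Fin b) ℝ) :
    opNorm X ≤ opNormC (X.map Complex.ofReal) := by
  rw [opNorm]
  refine ContinuousLinearMap.opNorm_le_bound _ (opNormC_nonneg _) fun v => ?_
  set vc : EuclideanSpace ℂ (Fin b) := WithLp.toLp 2 (fun i => (v i : ℂ)) with hvc
  have hnv : ‖vc‖ = ‖v‖ := by
    simp [EuclideanSpace.norm_eq, hvc]
  have h1 : ‖(EuclideanSpace.equiv (Fin a) ℂ).symm ((X.map Complex.ofReal) *ᵥ vc)‖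
      ≤ ‖X.map Complex.ofReal‖ * ‖vc‖ := Matrix.l2_opNorm_mulVec _ _
  rw [← opNormC_eq_l2, hnv] at h1
  refine le_trans (le_of_eq ?_) h1
  rw [EuclideanSpace.norm_eq, EuclideanSpace.norm_eq]
  congr 1
  refine Finset.sum_congr rfl fun i _ => ?_
  have h2 : ((EuclideanSpace.equiv (Fin a) ℂ).symm ((X.map Complex.ofReal) *ᵥ vc)) i
      = ((X.map Complex.ofReal) *ᵥ vc) i := rfl
  have h3 : (LinearMap.toContinuousLinearMap (Matrix.toEuclideanLin X)) v i
      = (X *ᵥ (fun j => v j)) i := rfl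
  rw [h2, h3]
  have h4 : ((X.map Complex.ofReal) *ᵥ vc) i = Complex.ofReal ((X *ᵥ (fun j => v j)) i) := by
    simp [Matrix.mulVec, dotProduct, hvc]
  rw [h4]
  simp

open scoped Matrix.Norms.L2Operator in
lemma gelfand_aux' {k : ℕ} (X : Matrix (Fin k) (Fin k) ℂ) {ρ' ρ : ℝ} (hρ : 0 < ρ) (hρ' : ρ' < ρ)
    (h : ∀ μ ∈ spectrum ℂ X, ‖μ‖ ≤ ρ') :
    ∃ N : ℕ, 0 < N ∧ opNormC (X ^ N) < ρ ^ N := by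
  simp only [opNormC_eq_l2]
  have hsr : spectralRadius ℂ X ≤ ENNReal.ofReal ρ' := by
    rw [spectralRadius]
    refine iSup₂_le fun μ hμ => ?_
    rw [← ENNReal.ofReal_coe_nnreal, coe_nnnorm]
    exact ENNReal.ofReal_le_ofReal (h μ hμ)
  have hlt : spectralRadius ℂ X < ENNReal.ofReal ρ :=
    hsr.trans_lt ((ENNReal.ofReal_lt_ofReal_iff hρ).2 hρ')
  have htend := spectrum.pow_norm_pow_one_div_tendsto_nhds_spectralRadius X
  have hev : ∀ᶠ n : ℕ in Filter.atTop,
      ENNReal.ofReal (‖X ^ n‖ ^ (1 / (n : ℝ))) < ENNReal.ofReal ρ :=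
    htend.eventually_lt_const hlt
  obtain ⟨N, hN1, hN2⟩ := (hev.and (Filter.eventually_ge_atTop 1)).exists
  refine ⟨N, hN2, ?_⟩
  have hx : ‖X ^ N‖ ^ (1 / (N : ℝ)) < ρ := (ENNReal.ofReal_lt_ofReal_iff hρ).1 hN1
  have hNpos : (0 : ℝ) < N := by exact_mod_cast hN2
  have heq : ‖X ^ N‖ = (‖X ^ N‖ ^ (1 / (N : ℝ))) ^ N := by
    rw [← Real.rpow_natCast (‖X ^ N‖ ^ (1 / (N : ℝ))) N, ← Real.rpow_mul (norm_nonneg _),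
      one_div_mul_cancel (ne_of_gt hNpos), Real.rpow_one]
  rw [heq]
  exact pow_lt_pow_left₀ hx (Real.rpow_nonneg (norm_nonneg _) _) (by omega : N ≠ 0)

open Matrix in
lemma pow_decay {p k : ℕ} {Θ : Set (EuclideanSpace ℝ (Fin p))} (hcomp : IsCompact Θ)
    {C : EuclideanSpace ℝ (Fin p) → Matrix (Fin k) (Fin k) ℝ} (hC : ContinuousOn C Θ)
    (hdet : ∀ θ ∈ Θ, ∀ z : ℂ, ‖z‖ ≤ 1 →
      ((1 : Matrix (Fin k) (Fin k) ℂ) - z • (C θ).map Complex.ofReal).det ≠ 0) :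
    ∃ M ρ : ℝ, 0 ≤ M ∧ 0 < ρ ∧ ρ < 1 ∧ ∀ θ ∈ Θ, ∀ j : ℕ, opNorm (C θ ^ j) ≤ M * ρ ^ j := by
  rcases Θ.eq_empty_or_nonempty with hΘ | hne
  · exact ⟨0, 1/2, le_refl _, by norm_num, by norm_num, by simp [hΘ]⟩
  set D : EuclideanSpace ℝ (Fin p) → Matrix (Fin k) (Fin k) ℂ :=
    fun θ => (C θ).map Complex.ofReal with hDdef
  have hDcont : ContinuousOn D Θ :=
    (Continuous.matrix_map continuous_id Complex.continuous_ofReal).comp_continuousOn hC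
  -- Step A : enlarge the radius of non-vanishing of the determinant
  have hr : ∃ r : ℝ, 1 < r ∧ ∀ θ ∈ Θ, ∀ z : ℂ, ‖z‖ ≤ r →
      ((1 : Matrix (Fin k) (Fin k) ℂ) - z • D θ).det ≠ 0 := by
    set T : Set (EuclideanSpace ℝ (Fin p) × ℂ) := Θ ×ˢ Metric.closedBall (0:ℂ) 2 with hT
    have hTcomp : IsCompact T := hcomp.prod (isCompact_closedBall _ _)
    have hg : ContinuousOn (fun q : EuclideanSpace ℝ (Fin p) × ℂ =>
        ((1 : Matrix (Fin k) (Fin k) ℂ) - q.2 • D q.1).det) T := by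
      have h1 : ContinuousOn (fun q : EuclideanSpace ℝ (Fin p) × ℂ => D q.1) T :=
        hDcont.comp continuous_fst.continuousOn (fun q hq => hq.1)
      have h2 : ContinuousOn (fun q : EuclideanSpace ℝ (Fin p) × ℂ => q.2 • D q.1) T :=
        continuous_snd.continuousOn.smul h1
      have h3 : ContinuousOn (fun q : EuclideanSpace ℝ (Fin p) × ℂ =>
          (1 : Matrix (Fin k) (Fin k) ℂ) - q.2 • D q.1) T := continuousOn_const.sub h2
      exact (continuous_id.matrix_det).comp_continuousOn h3
    set S : Set (EuclideanSpace ℝ (Fin p) × ℂ) := T ∩ (fun q : EuclideanSpace ℝ (Fin p) × ℂ =>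
        ((1 : Matrix (Fin k) (Fin k) ℂ) - q.2 • D q.1).det) ⁻¹' {0} with hS
    have hScl : IsClosed S := hg.preimage_isClosed_of_isClosed hTcomp.isClosed isClosed_singleton
    have hScomp : IsCompact S := hTcomp.of_isClosed_subset hScl Set.inter_subset_left
    by_cases hSne : S.Nonempty
    · obtain ⟨q0, hq0S, hq0min⟩ := hScomp.exists_isMinOn hSne
        ((continuous_snd.norm).continuousOn)
      have hq0det : ((1 : Matrix (Fin k) (Fin k) ℂ) - q0.2 • D q0.1).det = 0 := hq0S.2
      have hq0Θ : q0.1 ∈ Θ := hq0S.1.1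
      have hm1 : 1 < ‖q0.2‖ := by
        by_contra hle
        push_neg at hle
        exact hdet q0.1 hq0Θ q0.2 hle hq0det
      refine ⟨min ((1 + ‖q0.2‖)/2) 2, ?_, ?_⟩
      · rw [lt_min_iff]
        constructor <;> [linarith; norm_num]
      · intro θ hθ z hz hdet0
        have hz2 : ‖z‖ ≤ 2 := le_trans hz (min_le_right _ _)
        have hzS : (θ, z) ∈ S :=
          ⟨⟨hθ, by simpa [Metric.mem_closedBall, dist_zero_right] using hz2⟩, hdet0⟩
        have hmin := (isMinOn_iff.mp hq0min) _ hzS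
        have hz1 : ‖z‖ ≤ (1 + ‖q0.2‖)/2 := le_trans hz (min_le_left _ _)
        simp only at hmin
        linarith
    · refine ⟨2, one_lt_two, fun θ hθ z hz hdet0 => hSne ⟨(θ, z),
        ⟨⟨hθ, by simpa [Metric.mem_closedBall, dist_zero_right] using hz⟩, hdet0⟩⟩⟩
  obtain ⟨r, hr1, hrdet⟩ := hr
  have hr0 : (0:ℝ) < r := lt_trans one_pos hr1
  set ρ' : ℝ := 1/r with hρ'def
  set ρ : ℝ := (ρ' + 1)/2 with hρdef
  have hρ'0 : 0 < ρ' := by positivity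
  have hρ'1 : ρ' < 1 := by rw [hρ'def, div_lt_one hr0]; exact hr1
  have hρpos : 0 < ρ := by rw [hρdef]; linarith
  have hρlt1 : ρ < 1 := by rw [hρdef]; linarith
  have hρ'ρ : ρ' < ρ := by rw [hρdef]; linarith
  -- Step B : spectrum bound
  have hspec : ∀ θ ∈ Θ, ∀ μ ∈ spectrum ℂ (D θ), ‖μ‖ ≤ ρ' := by
    intro θ hθ μ hμ
    by_contra hgt
    push_neg at hgt
    have hμ0 : μ ≠ 0 := by
      intro h0
      rw [h0, norm_zero] at hgt
      linarith
    have hdet0 : ((algebraMap ℂ (Matrix (Fin k) (Fin k) ℂ) μ) - D θ).det = 0 := by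
      have hnu := spectrum.mem_iff.mp hμ
      by_contra hne0
      exact hnu ((Matrix.isUnit_iff_isUnit_det _).mpr (isUnit_iff_ne_zero.mpr hne0))
    have hzr : ‖μ⁻¹‖ ≤ r := by
      rw [norm_inv]
      have h1 : ρ' < ‖μ‖ := hgt
      have h2 : ‖μ‖⁻¹ < ρ'⁻¹ := by
        apply inv_strictAnti₀ hρ'0 h1
      have h3 : ρ'⁻¹ = r := by rw [hρ'def]; field_simp
      linarith
    apply hrdet θ hθ μ⁻¹ hzr
    have heq : (1 : Matrix (Fin k) (Fin k) ℂ) - μ⁻¹ • D θ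
        = μ⁻¹ • ((algebraMap ℂ (Matrix (Fin k) (Fin k) ℂ) μ) - D θ) := by
      rw [smul_sub, Algebra.algebraMap_eq_smul_one, smul_smul, inv_mul_cancel₀ hμ0, one_smul]
    rw [heq, Matrix.det_smul, hdet0, mul_zero]
  -- Step C : Gelfand + compactness
  have key : ∀ θ0 : Θ, ∃ N : ℕ, 0 < N ∧ opNormC ((D θ0)^N) < ρ^N := fun θ0 =>
    gelfand_aux' (D θ0) hρpos hρ'ρ (hspec θ0 θ0.2)
  choose N hNpos hNlt using key
  have hFcont : ∀ n : ℕ, ContinuousOn (fun θ => opNormC ((D θ)^n)) Θ := fun n =>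
    (continuous_opNormC.comp (continuous_pow n)).comp_continuousOn hDcont
  have hV : ∀ θ0 : Θ, ∃ V : Set (EuclideanSpace ℝ (Fin p)), IsOpen V ∧ (θ0 : EuclideanSpace ℝ (Fin p)) ∈ V ∧
      ∀ θ, θ ∈ V → θ ∈ Θ → opNormC ((D θ)^(N θ0)) < ρ^(N θ0) := by
    intro θ0
    have hcw : ContinuousWithinAt (fun θ => opNormC ((D θ)^(N θ0))) Θ (θ0 : EuclideanSpace ℝ (Fin p)) :=
      (hFcont (N θ0)).continuousWithinAt θ0.2
    have hmem : (fun θ => opNormC ((D θ)^(N θ0))) ⁻¹' (Set.Iio (ρ^(N θ0)))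
        ∈ nhdsWithin (θ0 : EuclideanSpace ℝ (Fin p)) Θ :=
      hcw (Iio_mem_nhds (hNlt θ0))
    obtain ⟨u, huo, hu0, husub⟩ := mem_nhdsWithin.mp hmem
    exact ⟨u, huo, hu0, fun θ h1 h2 => husub ⟨h1, h2⟩⟩
  choose V hVopen hVmem hVlt using hV
  obtain ⟨t, htcov⟩ := hcomp.elim_finite_subcover V hVopen
    (fun θ hθ => Set.mem_iUnion.mpr ⟨⟨θ, hθ⟩, hVmem _⟩)
  set Nmax := t.sup N with hNmax
  have hBs : ∀ s : ℕ, ∃ bnd : ℝ, ∀ θ ∈ Θ, opNormC ((D θ)^s) ≤ bnd := fun s => by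
    obtain ⟨bnd, hb⟩ := hcomp.exists_bound_of_continuousOn (hFcont s)
    exact ⟨bnd, fun θ hθ => (le_abs_self _).trans (by simpa [Real.norm_eq_abs] using hb θ hθ)⟩
  choose bnd hbnd using hBs
  set B := ∑ s ∈ Finset.range (Nmax+1), |bnd s| with hBdef
  have hBnonneg : 0 ≤ B := Finset.sum_nonneg fun s _ => abs_nonneg _
  have hBle : ∀ s : ℕ, s ≤ Nmax → ∀ θ ∈ Θ, opNormC ((D θ)^s) ≤ B := fun s hs θ hθ =>
    (hbnd s θ hθ).trans ((le_abs_self _).trans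
      (Finset.single_le_sum (f := fun s => |bnd s|) (fun _ _ => abs_nonneg _)
        (Finset.mem_range.mpr (by omega))))
  have hpowmul : ∀ (X R : Matrix (Fin k) (Fin k) ℂ) (q : ℕ),
      opNormC (X^q * R) ≤ opNormC X ^ q * opNormC R := by
    intro X R q
    induction q with
    | zero => simp
    | succ q ih =>
      have h1 : X^(q+1) * R = X * (X^q * R) := by rw [pow_succ']; rw [mul_assoc]
      rw [h1]
      calc opNormC (X * (X^q * R)) ≤ opNormC X * opNormC (X^q * R) := opNormC_mul_le _ _
        _ ≤ opNormC X * (opNormC X ^ q * opNormC R) :=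
            mul_le_mul_of_nonneg_left ih (opNormC_nonneg _)
        _ = opNormC X ^ (q+1) * opNormC R := by ring
  have hMC : ∀ θ ∈ Θ, ∀ j : ℕ, opNormC ((D θ)^j) ≤ (B / ρ^Nmax) * ρ^j := by
    intro θ hθ j
    obtain ⟨i, hit, hiV⟩ : ∃ i ∈ t, θ ∈ V i := by simpa using (htcov hθ)
    have hNi : 0 < N i := hNpos i
    have hNiNmax : N i ≤ Nmax := Finset.le_sup hit
    set q := j / N i with hq
    set s := j % N i with hs
    have hjq : (N i) * q + s = j := Nat.div_add_mod j (N i)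
    have hslt : s < N i := Nat.mod_lt _ hNi
    have hsplit : (D θ)^j = ((D θ)^(N i))^q * (D θ)^s := by
      rw [← pow_mul, ← pow_add, hjq]
    have h1 : opNormC ((D θ)^j) ≤ opNormC ((D θ)^(N i)) ^ q * opNormC ((D θ)^s) := by
      rw [hsplit]; exact hpowmul _ _ q
    have h2 : opNormC ((D θ)^(N i)) ^ q ≤ (ρ^(N i))^q :=
      pow_le_pow_left₀ (opNormC_nonneg _) (le_of_lt (hVlt i θ hiV hθ)) q
    have h3 : opNormC ((D θ)^s) ≤ B := hBle s (by omega) θ hθ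
    have hρp : (0:ℝ) ≤ ρ ^ (N i * q) := pow_nonneg hρpos.le _
    have hpp : ρ^Nmax ≤ ρ^s := pow_le_pow_of_le_one hρpos.le hρlt1.le (by omega)
    have hρN : (0:ℝ) < ρ^Nmax := pow_pos hρpos _
    have hρj : ρ^j = ρ^(N i * q) * ρ^s := by rw [← pow_add, hjq]
    calc opNormC ((D θ)^j) ≤ (ρ^(N i))^q * B := le_trans h1
          (mul_le_mul h2 h3 (opNormC_nonneg _) (pow_nonneg (pow_nonneg hρpos.le _) _))
      _ = ρ^(N i * q) * B := by rw [← pow_mul]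
      _ ≤ (B / ρ^Nmax) * ρ^j := by
          rw [hρj, div_mul_eq_mul_div, le_div_iff₀ hρN]
          calc ρ^(N i * q) * B * ρ^Nmax ≤ ρ^(N i * q) * B * ρ^s := by
                apply mul_le_mul_of_nonneg_left hpp (by positivity)
            _ = B * (ρ^(N i * q) * ρ^s) := by ring
  refine ⟨B / ρ^Nmax, ρ, by positivity, hρpos, hρlt1, fun θ hθ j => ?_⟩
  have hmap : (C θ ^ j).map Complex.ofReal = (D θ)^j := by
    exact
      congrArg (fun X : Matrix (Fin k) (Fin k) ℂ => X)
        (map_pow (Complex.ofRealHom.mapMatrix) (C θ) j)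
  have h5 : opNorm (C θ ^ j) ≤ opNormC ((D θ)^j) := by
    rw [← hmap]; exact opNorm_le_map_ofReal _
  exact le_trans h5 (hMC θ hθ j)


/-- **Uniform geometric decay of `A(θ) C(θ)^j K(θ)`.**
If `A, C, K` are continuous on a compact `Θ ⊆ ℝ^p` and `det (I - z C(θ)) ≠ 0` for all
`|z| ≤ 1` and `θ ∈ Θ`, then there are `M ≥ 0` and `ρ ∈ [0,1)` with
`‖A(θ) C(θ)^j K(θ)‖_op ≤ M ρ^j` for all `θ ∈ Θ`, `j ∈ ℕ`; in particular
`∑_j sup_{θ ∈ Θ} ‖A(θ) C(θ)^j K(θ)‖_op` converges. -/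
theorem summable_opNorm_of_spectral_radius_lt_one
    {p d m : ℕ} (Θ : Set (EuclideanSpace ℝ (Fin p))) (hcomp : IsCompact Θ)
    (A : EuclideanSpace ℝ (Fin p) → Matrix (Fin d) (Fin m) ℝ)
    (C : EuclideanSpace ℝ (Fin p) → Matrix (Fin m) (Fin m) ℝ)
    (K : EuclideanSpace ℝ (Fin p) → Matrix (Fin m) (Fin d) ℝ)
    (hA : ContinuousOn A Θ) (hC : ContinuousOn C Θ) (hK : ContinuousOn K Θ)
    (hdet : ∀ θ ∈ Θ, ∀ z : ℂ, ‖z‖ ≤ 1 →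
      ((1 : Matrix (Fin m) (Fin m) ℂ) - z • (C θ).map Complex.ofReal).det ≠ 0) :
    ∃ M ρ : ℝ, 0 ≤ M ∧ 0 ≤ ρ ∧ ρ < 1 ∧
      (∀ θ ∈ Θ, ∀ j : ℕ, opNorm (A θ * C θ ^ j * K θ) ≤ M * ρ ^ j) ∧
      Summable (fun j : ℕ => ⨆ θ ∈ Θ, opNorm (A θ * C θ ^ j * K θ)) := by
  rcases Θ.eq_empty_or_nonempty with hΘ | hne
  · refine ⟨0, 1/2, le_refl _, by norm_num, by norm_num, by simp [hΘ], ?_⟩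
    have hz : (fun j : ℕ => ⨆ θ ∈ Θ, opNorm (A θ * C θ ^ j * K θ)) = fun _ => (0:ℝ) := by
      funext j
      rw [hΘ]
      simp
    rw [hz]
    exact summable_zero
  obtain ⟨M0, ρ, hM0, hρ0, hρ1, hpow⟩ := pow_decay hcomp hC hdet
  obtain ⟨a, ha⟩ := hcomp.exists_bound_of_continuousOn (continuous_opNorm.comp_continuousOn hA)
  obtain ⟨kb, hkb⟩ := hcomp.exists_bound_of_continuousOn (continuous_opNorm.comp_continuousOn hK)
  obtain ⟨θstar, hθstar⟩ := hne
  have ha0 : 0 ≤ a := le_trans (norm_nonneg _) (ha θstar hθstar)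
  have hkb0 : 0 ≤ kb := le_trans (norm_nonneg _) (hkb θstar hθstar)
  have haθ : ∀ θ ∈ Θ, opNorm (A θ) ≤ a := fun θ hθ =>
    (le_abs_self _).trans (by simpa [Real.norm_eq_abs] using ha θ hθ)
  have hkθ : ∀ θ ∈ Θ, opNorm (K θ) ≤ kb := fun θ hθ =>
    (le_abs_self _).trans (by simpa [Real.norm_eq_abs] using hkb θ hθ)
  have hbound : ∀ θ ∈ Θ, ∀ j : ℕ, opNorm (A θ * C θ ^ j * K θ) ≤ (a * M0 * kb) * ρ ^ j := by
    intro θ hθ j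
    have hCj := hpow θ hθ j
    calc opNorm (A θ * C θ ^ j * K θ) ≤ opNorm (A θ * C θ ^ j) * opNorm (K θ) :=
          opNorm_mul_le _ _
      _ ≤ (opNorm (A θ) * opNorm (C θ ^ j)) * opNorm (K θ) :=
          mul_le_mul_of_nonneg_right (opNorm_mul_le _ _) (opNorm_nonneg _)
      _ ≤ (a * (M0 * ρ ^ j)) * kb := by
          apply mul_le_mul _ (hkθ θ hθ) (opNorm_nonneg _) (by positivity)
          exact mul_le_mul (haθ θ hθ) hCj (opNorm_nonneg _) ha0
      _ = (a * M0 * kb) * ρ ^ j := by ring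
  refine ⟨a * M0 * kb, ρ, by positivity, hρ0.le, hρ1, hbound, ?_⟩
  have hsup_nonneg : ∀ j : ℕ, 0 ≤ ⨆ θ ∈ Θ, opNorm (A θ * C θ ^ j * K θ) := fun j =>
    Real.iSup_nonneg fun θ => Real.iSup_nonneg fun _ => opNorm_nonneg _
  have hsup_le : ∀ j : ℕ, (⨆ θ ∈ Θ, opNorm (A θ * C θ ^ j * K θ)) ≤ (a * M0 * kb) * ρ ^ j :=
    fun j => Real.iSup_le (fun θ => Real.iSup_le (fun hθ => hbound θ hθ j) (by positivity))
      (by positivity)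
  exact Summable.of_nonneg_of_le hsup_nonneg hsup_le
    ((summable_geometric_of_lt_one hρ0.le hρ1).mul_left _)
end

section
/- Let Σ and Σ̃ be d×d real symmetric positive semidefinite matrices. Then for every d×d real matrix C such that the 2d×2d block matrix with blocks [[Σ, C], [Cᵀ, Σ̃]] is positive semidefinite, one has tr(C) ≤ tr((Σ̃^{1/2}·Σ·Σ̃^{1/2})^{1/2}). -/
open Matrix
open scoped Classical

/-- The unique positive semidefinite square root of a positive semidefinite real matrix
(junk value `0` if the matrix is not positive semidefinite). -/
noncomputable def psdSqrt {d : ℕ} (A : Matrix (Fin d) (Fin d) ℝ) : Matrix (Fin d) (Fin d) ℝ :=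
  if h : A.PosSemidef then
    (h.1.eigenvectorUnitary : Matrix (Fin d) (Fin d) ℝ) * diagonal (fun i => Real.sqrt (h.1.eigenvalues i)) *
      (star h.1.eigenvectorUnitary : Matrix (Fin d) (Fin d) ℝ)
  else 0


namespace TraceAuxCFC

/-- scalar auxiliary functions -/
noncomputable def aInd : ℝ → ℝ := fun t => if t = 0 then 0 else 1
noncomputable def aPis : ℝ → ℝ := fun t => if t = 0 then 0 else (Real.sqrt t)⁻¹
noncomputable def aQu : ℝ → ℝ := fun t => Real.sqrt (Real.sqrt t)
noncomputable def aPiq : ℝ → ℝ := fun t => if t = 0 then 0 else (Real.sqrt (Real.sqrt t))⁻¹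
noncomputable def aPi : ℝ → ℝ := fun t => if t = 0 then 0 else t⁻¹

variable {n : Type*} [Fintype n] [DecidableEq n]


lemma unit_star_mul {A : Matrix n n ℝ} (hA : A.IsHermitian) :
    (star (hA.eigenvectorUnitary : Matrix n n ℝ)) * (hA.eigenvectorUnitary : Matrix n n ℝ) = 1 :=
  Matrix.mem_unitaryGroup_iff'.mp (hA.eigenvectorUnitary).2

lemma unit_mul_star {A : Matrix n n ℝ} (hA : A.IsHermitian) :
    (hA.eigenvectorUnitary : Matrix n n ℝ) * (star (hA.eigenvectorUnitary : Matrix n n ℝ)) = 1 :=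
  Matrix.mem_unitaryGroup_iff.mp (hA.eigenvectorUnitary).2

lemma cfc_mul {A : Matrix n n ℝ} (hA : A.IsHermitian) (f g : ℝ → ℝ) :
    hA.cfc f * hA.cfc g = hA.cfc (fun t => f t * g t) := by
  have hcancel : ∀ M : Matrix n n ℝ, (star (hA.eigenvectorUnitary : Matrix n n ℝ)) *
      ((hA.eigenvectorUnitary : Matrix n n ℝ) * M) = M := by
    intro M; rw [← Matrix.mul_assoc, unit_star_mul hA, Matrix.one_mul]
  rw [Matrix.IsHermitian.cfc, Matrix.IsHermitian.cfc, Matrix.IsHermitian.cfc]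
  simp only [Matrix.mul_assoc, Unitary.conjStarAlgAut_apply]
  rw [hcancel, ← Matrix.mul_assoc (Matrix.diagonal _) (Matrix.diagonal _),
    Matrix.diagonal_mul_diagonal]
  congr 2

lemma cfc_congr {A : Matrix n n ℝ} (hA : A.IsHermitian) {f g : ℝ → ℝ}
    (h : ∀ i, f (hA.eigenvalues i) = g (hA.eigenvalues i)) : hA.cfc f = hA.cfc g := by
  rw [Matrix.IsHermitian.cfc, Matrix.IsHermitian.cfc]
  have : RCLike.ofReal ∘ f ∘ hA.eigenvalues = (RCLike.ofReal ∘ g ∘ hA.eigenvalues : n → ℝ) :=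
    funext fun i => by simp [h i]
  rw [this]

lemma cfc_id {A : Matrix n n ℝ} (hA : A.IsHermitian) : hA.cfc (fun t => t) = A := by
  rw [Matrix.IsHermitian.cfc]
  exact (hA.spectral_theorem).symm

lemma cfc_one {A : Matrix n n ℝ} (hA : A.IsHermitian) : hA.cfc (fun _ => 1) = 1 := by
  rw [Matrix.IsHermitian.cfc]
  have : Matrix.diagonal (RCLike.ofReal ∘ (fun _ => (1:ℝ)) ∘ hA.eigenvalues) = (1 : Matrix n n ℝ) := by
    rw [show (RCLike.ofReal ∘ (fun _ => (1:ℝ)) ∘ hA.eigenvalues : n → ℝ) = fun _ => 1 from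
      funext fun i => by simp, Matrix.diagonal_one]
  rw [this, Unitary.conjStarAlgAut_apply, Matrix.mul_one, unit_mul_star hA]

lemma cfc_zero {A : Matrix n n ℝ} (hA : A.IsHermitian) : hA.cfc (fun _ => 0) = 0 := by
  rw [Matrix.IsHermitian.cfc]
  have : Matrix.diagonal (RCLike.ofReal ∘ (fun _ => (0:ℝ)) ∘ hA.eigenvalues) = (0 : Matrix n n ℝ) := by
    rw [show (RCLike.ofReal ∘ (fun _ => (0:ℝ)) ∘ hA.eigenvalues : n → ℝ) = fun _ => 0 from
      funext fun i => by simp, Matrix.diagonal_zero]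
  rw [this, Unitary.conjStarAlgAut_apply, Matrix.mul_zero, Matrix.zero_mul]

lemma cfc_add {A : Matrix n n ℝ} (hA : A.IsHermitian) (f g : ℝ → ℝ) :
    hA.cfc f + hA.cfc g = hA.cfc (fun t => f t + g t) := by
  rw [Matrix.IsHermitian.cfc, Matrix.IsHermitian.cfc, Matrix.IsHermitian.cfc]
  simp only [Unitary.conjStarAlgAut_apply]
  rw [← Matrix.add_mul, ← Matrix.mul_add]
  congr 2
  rw [Matrix.diagonal_add]
  congr 1

lemma cfc_herm {A : Matrix n n ℝ} (hA : A.IsHermitian) (f : ℝ → ℝ) :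
    (hA.cfc f).IsHermitian := by
  rw [Matrix.IsHermitian, Matrix.IsHermitian.cfc]
  simp [Matrix.conjTranspose_mul, Matrix.diagonal_conjTranspose, Matrix.star_eq_conjTranspose,
    Matrix.mul_assoc, Pi.star_def]

lemma cfc_transpose {A : Matrix n n ℝ} (hA : A.IsHermitian) (f : ℝ → ℝ) :
    (hA.cfc f)ᵀ = hA.cfc f := by
  have h := cfc_herm hA f
  rwa [Matrix.IsHermitian, Matrix.conjTranspose_eq_transpose_of_trivial] at h

/-- trace of PSD matrix is nonneg -/
lemma psd_trace_nonneg {A : Matrix n n ℝ} (hA : A.PosSemidef) : 0 ≤ A.trace := by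
  rw [Matrix.trace]
  refine Finset.sum_nonneg fun i _ => ?_
  exact hA.diag_nonneg

lemma trace_fromBlocks {m : Type*} [Fintype m] (A : Matrix n n ℝ) (B : Matrix n m ℝ)
    (C : Matrix m n ℝ) (D : Matrix m m ℝ) :
    (Matrix.fromBlocks A B C D).trace = A.trace + D.trace := by
  simp [Matrix.trace, Fintype.sum_sum_type, Matrix.diag]

lemma eq_zero_of_trace_transpose_mul_self {m : Type*} [Fintype m]
    {A : Matrix m n ℝ} (h : (Aᵀ * A).trace = 0) : A = 0 := by
  rw [← Matrix.conjTranspose_eq_transpose_of_trivial] at h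
  have hdiag : ∀ j, (Aᴴ * A) j j = 0 := by
    intro j
    have hnn : ∀ k ∈ Finset.univ, 0 ≤ (Aᴴ * A) k k := by
      intro k _
      rw [Matrix.mul_apply]
      exact Finset.sum_nonneg fun l _ => by
        simp [Matrix.conjTranspose_apply]
        exact mul_self_nonneg _
    exact (Finset.sum_eq_zero_iff_of_nonneg hnn).mp h j (Finset.mem_univ j)
  rw [← Matrix.conjTranspose_mul_self_eq_zero (A := A)]
  ext i j
  rw [Matrix.mul_apply]
  have h2 : ∀ i j, (Aᴴ * A) i j = ∑ l, A l i * A l j := by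
    intro i j; rw [Matrix.mul_apply]; simp [Matrix.conjTranspose_apply]
  have hcol : ∀ l, A l j = 0 := by
    have := hdiag j
    rw [h2] at this
    intro l
    have := (Finset.sum_eq_zero_iff_of_nonneg (fun l _ => mul_self_nonneg (A l j))).mp this l
      (Finset.mem_univ l)
    exact mul_self_eq_zero.mp this
  simp [Matrix.conjTranspose_apply, hcol]


lemma cfc_mul_eq {A : Matrix n n ℝ} (hA : A.IsHermitian) (hnn : ∀ i, 0 ≤ hA.eigenvalues i)
    {f g h : ℝ → ℝ} (H : ∀ t, 0 ≤ t → f t * g t = h t) :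
    hA.cfc f * hA.cfc g = hA.cfc h :=
  (cfc_mul hA f g).trans (cfc_congr hA fun i => H _ (hnn i))

section Scalars

lemma sqrt_ne_zero_of {t : ℝ} (ht : 0 ≤ t) (h : t ≠ 0) : Real.sqrt t ≠ 0 :=
  ne_of_gt (Real.sqrt_pos.mpr (lt_of_le_of_ne ht (Ne.symm h)))

lemma sc_sqrt_pis : ∀ t : ℝ, 0 ≤ t → Real.sqrt t * aPis t = aInd t := by
  intro t ht
  unfold aPis aInd
  by_cases h : t = 0
  · simp [h]
  · rw [if_neg h, if_neg h, mul_inv_cancel₀ (sqrt_ne_zero_of ht h)]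

lemma sc_pis_sqrt : ∀ t : ℝ, 0 ≤ t → aPis t * Real.sqrt t = aInd t := by
  intro t ht; rw [mul_comm]; exact sc_sqrt_pis t ht

lemma sc_id_pis : ∀ t : ℝ, 0 ≤ t → t * aPis t = Real.sqrt t := by
  intro t ht
  unfold aPis
  by_cases h : t = 0
  · simp [h]
  · rw [if_neg h]
    have h1 := sqrt_ne_zero_of ht h
    field_simp
    exact (Real.sq_sqrt ht).symm

lemma sc_pis_id : ∀ t : ℝ, 0 ≤ t → aPis t * t = Real.sqrt t := by
  intro t ht; rw [mul_comm]; exact sc_id_pis t ht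

lemma sc_sqrt_ind : ∀ t : ℝ, 0 ≤ t → Real.sqrt t * aInd t = Real.sqrt t := by
  intro t _
  unfold aInd
  by_cases h : t = 0
  · simp [h]
  · rw [if_neg h, mul_one]

lemma sc_ind_sqrt : ∀ t : ℝ, 0 ≤ t → aInd t * Real.sqrt t = Real.sqrt t := by
  intro t ht; rw [mul_comm]; exact sc_sqrt_ind t ht

lemma sc_id_j : ∀ t : ℝ, 0 ≤ t → t * (1 - aInd t) = 0 := by
  intro t _
  unfold aInd
  by_cases h : t = 0
  · simp [h]
  · rw [if_neg h]; ring

lemma sc_qu_qu : ∀ t : ℝ, 0 ≤ t → aQu t * aQu t = Real.sqrt t := by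
  intro t _
  unfold aQu
  exact Real.mul_self_sqrt (Real.sqrt_nonneg t)

lemma sc_qu_piq : ∀ t : ℝ, 0 ≤ t → aQu t * aPiq t = aInd t := by
  intro t ht
  unfold aQu aPiq aInd
  by_cases h : t = 0
  · simp [h]
  · rw [if_neg h, if_neg h, mul_inv_cancel₀]
    exact sqrt_ne_zero_of (Real.sqrt_nonneg t) (sqrt_ne_zero_of ht h)

lemma sc_piq_piq : ∀ t : ℝ, 0 ≤ t → aPiq t * aPiq t = aPis t := by
  intro t ht
  unfold aPiq aPis
  by_cases h : t = 0
  · simp [h]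
  · rw [if_neg h, if_neg h, ← mul_inv]
    rw [Real.mul_self_sqrt (Real.sqrt_nonneg t)]

lemma sc_pi_id : ∀ t : ℝ, 0 ≤ t → aPi t * t = aInd t := by
  intro t _
  unfold aPi aInd
  by_cases h : t = 0
  · simp [h]
  · rw [if_neg h, if_neg h, inv_mul_cancel₀ h]

end Scalars

end TraceAuxCFC

open TraceAuxCFC

/-- **Trace bound for admissible cross-covariances.**
If `Σ` and `Σ̃` are positive semidefinite and the block matrix `[[Σ, C], [Cᵀ, Σ̃]]` is
positive semidefinite, then `tr C ≤ tr ((Σ̃^{1/2} Σ Σ̃^{1/2})^{1/2})`. -/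
theorem trace_le_trace_sqrt_of_fromBlocks_posSemidef
    {d : ℕ} (S St : Matrix (Fin d) (Fin d) ℝ)
    (hS : S.PosSemidef) (hSt : St.PosSemidef)
    (C : Matrix (Fin d) (Fin d) ℝ)
    (hblock : (Matrix.fromBlocks S C Cᵀ St).PosSemidef) :
    C.trace ≤ (psdSqrt (psdSqrt St * S * psdSqrt St)).trace := by
  classical
  have hSh : S.IsHermitian := hS.1
  have hSth : St.IsHermitian := hSt.1
  have hSe : Sᴴ = S := hSh
  -- the fundamental trace inequality from block positivity
  have key0 : ∀ P Q : Matrix (Fin d) (Fin d) ℝ,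
      2 * (Pᵀ * C * Q).trace ≤ (Pᵀ * S * P).trace + (Qᵀ * St * Q).trace := by
    intro P Q
    set M : Matrix (Fin d ⊕ Fin d) (Fin d ⊕ Fin d) ℝ :=
      Matrix.fromBlocks P (0 : Matrix (Fin d) (Fin d) ℝ) (-Q) (0 : Matrix (Fin d) (Fin d) ℝ)
      with hMdef
    have h1 : (Mᴴ * (Matrix.fromBlocks S C Cᵀ St) * M).PosSemidef :=
      hblock.conjTranspose_mul_mul_same M
    rw [hMdef] at h1
    have h2 := psd_trace_nonneg h1
    simp only [Matrix.fromBlocks_conjTranspose, Matrix.fromBlocks_multiply,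
      trace_fromBlocks] at h2
    simp only [Matrix.conjTranspose_zero, Matrix.conjTranspose_neg,
      Matrix.conjTranspose_eq_transpose_of_trivial, Matrix.zero_mul, Matrix.mul_zero,
      add_zero, zero_add, Matrix.neg_mul, Matrix.mul_neg, neg_neg, Matrix.transpose_neg,
      Matrix.add_mul, Matrix.trace_add, Matrix.trace_neg, Matrix.trace_zero] at h2
    have h3 : (Qᵀ * Cᵀ * P).trace = (Pᵀ * C * Q).trace := by
      rw [← Matrix.trace_transpose (Qᵀ * Cᵀ * P)]
      congr 1
      rw [Matrix.transpose_mul, Matrix.transpose_mul, Matrix.transpose_transpose,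
        Matrix.transpose_transpose, Matrix.mul_assoc]
    rw [h3] at h2
    linarith
  -- scalar helper
  have scal : ∀ a b : ℝ, (∀ t : ℝ, 2 * (t * a) ≤ b) → a = 0 := by
    intro a b h
    by_contra hne
    have h1 := h ((|b| + 1) / (2 * a))
    have h2 : 2 * ((|b| + 1) / (2 * a) * a) = |b| + 1 := by field_simp
    rw [h2] at h1
    have := le_abs_self b
    linarith
  -- kernel lemmas
  have k1 : ∀ D : Matrix (Fin d) (Fin d) ℝ, St * D = 0 → C * D = 0 := by
    intro D hD
    apply eq_zero_of_trace_transpose_mul_self (n := Fin d)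
    apply scal _ (((C * D)ᵀ * S * (C * D)).trace)
    intro t
    have h1 := key0 (C * D) (t • D)
    rw [Matrix.mul_smul, Matrix.trace_smul, smul_eq_mul] at h1
    have h2 : (t • D)ᵀ * St * (t • D) = (t * t) • (Dᵀ * (St * D)) := by
      rw [Matrix.transpose_smul, Matrix.smul_mul, Matrix.smul_mul, Matrix.mul_smul, smul_smul,
        Matrix.mul_assoc]
    rw [h2, hD, Matrix.mul_zero, smul_zero, Matrix.trace_zero, add_zero] at h1
    calc 2 * (t * ((C * D)ᵀ * (C * D)).trace)
        = 2 * (t * ((C * D)ᵀ * C * D).trace) := by rw [Matrix.mul_assoc]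
      _ ≤ ((C * D)ᵀ * S * (C * D)).trace := h1
  have k2 : ∀ D : Matrix (Fin d) (Fin d) ℝ, S * D = 0 → Dᵀ * C = 0 := by
    intro D hD
    have hz : Cᵀ * D = 0 := by
      apply eq_zero_of_trace_transpose_mul_self (n := Fin d)
      apply scal _ (((Cᵀ * D)ᵀ * St * (Cᵀ * D)).trace)
      intro t
      have h1 := key0 (t • D) (Cᵀ * D)
      have h2 : (t • D)ᵀ * C * (Cᵀ * D) = t • (Dᵀ * C * (Cᵀ * D)) := by
        rw [Matrix.transpose_smul, Matrix.smul_mul, Matrix.smul_mul]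
      have h3 : (t • D)ᵀ * S * (t • D) = (t * t) • (Dᵀ * (S * D)) := by
        rw [Matrix.transpose_smul, Matrix.smul_mul, Matrix.smul_mul, Matrix.mul_smul, smul_smul,
          Matrix.mul_assoc]
      rw [h2, h3, hD, Matrix.mul_zero, smul_zero, Matrix.trace_zero, zero_add,
        Matrix.trace_smul, smul_eq_mul] at h1
      calc 2 * (t * ((Cᵀ * D)ᵀ * (Cᵀ * D)).trace)
          = 2 * (t * (Dᵀ * C * (Cᵀ * D)).trace) := by
            rw [Matrix.transpose_mul, Matrix.transpose_transpose, Matrix.mul_assoc]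
        _ ≤ ((Cᵀ * D)ᵀ * St * (Cᵀ * D)).trace := h1
    have := congrArg Matrix.transpose hz
    rwa [Matrix.transpose_mul, Matrix.transpose_transpose, Matrix.transpose_zero] at this
  -- set up the functional-calculus objects
  have hnnS : ∀ i, 0 ≤ hSh.eigenvalues i := fun i => hS.eigenvalues_nonneg i
  have hnnSt : ∀ i, 0 ≤ hSth.eigenvalues i := fun i => hSt.eigenvalues_nonneg i
  have hB : psdSqrt St = hSth.cfc Real.sqrt := by rw [psdSqrt, dif_pos hSt]; rfl
  rw [hB]
  set B : Matrix (Fin d) (Fin d) ℝ := hSth.cfc Real.sqrt with hBdef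
  have hBtr : Bᵀ = B := cfc_transpose hSth _
  have hBe : Bᴴ = B := cfc_herm hSth _
  have hAh : (B * S * B).IsHermitian := by
    show (B * S * B)ᴴ = B * S * B
    rw [Matrix.conjTranspose_mul, Matrix.conjTranspose_mul, hBe, hSe, Matrix.mul_assoc]
  have hApsd : (B * S * B).PosSemidef := by
    have h := hS.conjTranspose_mul_mul_same B
    rwa [hBe] at h
  have hnnA : ∀ i, 0 ≤ hAh.eigenvalues i := fun i => hApsd.eigenvalues_nonneg i
  have hT : psdSqrt (B * S * B) = hAh.cfc Real.sqrt := by rw [psdSqrt, dif_pos hApsd]; rfl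
  rw [hT]
  set T : Matrix (Fin d) (Fin d) ℝ := hAh.cfc Real.sqrt with hTdef
  set Bp : Matrix (Fin d) (Fin d) ℝ := hSth.cfc aPis with hBpdef
  set PB : Matrix (Fin d) (Fin d) ℝ := hSth.cfc aInd with hPBdef
  set JB : Matrix (Fin d) (Fin d) ℝ := hSth.cfc (fun t => 1 - aInd t) with hJBdef
  set X : Matrix (Fin d) (Fin d) ℝ := hSh.cfc Real.sqrt with hXdef
  set Xp : Matrix (Fin d) (Fin d) ℝ := hSh.cfc aPis with hXpdef
  set PX : Matrix (Fin d) (Fin d) ℝ := hSh.cfc aInd with hPXdef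
  set JX : Matrix (Fin d) (Fin d) ℝ := hSh.cfc (fun t => 1 - aInd t) with hJXdef
  set Th : Matrix (Fin d) (Fin d) ℝ := hAh.cfc aQu with hThdef
  set sA : Matrix (Fin d) (Fin d) ℝ := hAh.cfc aPiq with hsAdef
  set Tp : Matrix (Fin d) (Fin d) ℝ := hAh.cfc aPis with hTpdef
  set PT : Matrix (Fin d) (Fin d) ℝ := hAh.cfc aInd with hPTdef
  set JT : Matrix (Fin d) (Fin d) ℝ := hAh.cfc (fun t => 1 - aInd t) with hJTdef
  set Ap : Matrix (Fin d) (Fin d) ℝ := hAh.cfc aPi with hApdef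
  have hidSt : hSth.cfc (fun t => t) = St := cfc_id hSth
  have hidS : hSh.cfc (fun t => t) = S := cfc_id hSh
  have hidA : hAh.cfc (fun t => t) = B * S * B := cfc_id hAh
  -- transposes
  have hJTtr : JTᵀ = JT := cfc_transpose hAh _
  have hPXtr : PXᵀ = PX := cfc_transpose hSh _
  have hJXtr : JXᵀ = JX := cfc_transpose hSh _
  have hXtr : Xᵀ = X := cfc_transpose hSh _
  have hsAtr : sAᵀ = sA := cfc_transpose hAh _
  have hThtr : Thᵀ = Th := cfc_transpose hAh _
  have hPTtr : PTᵀ = PT := cfc_transpose hAh _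
  have hPBtr : PBᵀ = PB := cfc_transpose hSth _
  have hBptr : Bpᵀ = Bp := cfc_transpose hSth _
  -- within-matrix identities
  have mStJB : St * JB = 0 := by
    rw [← hidSt, hJBdef, cfc_mul_eq hSth hnnSt sc_id_j, TraceAuxCFC.cfc_zero]
  have mPBJB : PB + JB = 1 := by
    rw [hPBdef, hJBdef, TraceAuxCFC.cfc_add]
    rw [show (fun t => aInd t + (1 - aInd t)) = fun _ : ℝ => (1:ℝ) from funext fun t => by ring]
    exact TraceAuxCFC.cfc_one hSth
  have mPXJX : PX + JX = 1 := by
    rw [hPXdef, hJXdef, TraceAuxCFC.cfc_add]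
    rw [show (fun t => aInd t + (1 - aInd t)) = fun _ : ℝ => (1:ℝ) from funext fun t => by ring]
    exact TraceAuxCFC.cfc_one hSh
  have mPTJT : PT + JT = 1 := by
    rw [hPTdef, hJTdef, TraceAuxCFC.cfc_add]
    rw [show (fun t => aInd t + (1 - aInd t)) = fun _ : ℝ => (1:ℝ) from funext fun t => by ring]
    exact TraceAuxCFC.cfc_one hAh
  have mBpB : Bp * B = PB := cfc_mul_eq hSth hnnSt sc_pis_sqrt
  have mBBp : B * Bp = PB := cfc_mul_eq hSth hnnSt sc_sqrt_pis
  have mStBp : St * Bp = B := by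
    rw [← hidSt, hBpdef, hBdef]; exact cfc_mul_eq hSth hnnSt sc_id_pis
  have mBpSt : Bp * St = B := by
    rw [← hidSt, hBpdef, hBdef]; exact cfc_mul_eq hSth hnnSt sc_pis_id
  have mBPB : B * PB = B := cfc_mul_eq hSth hnnSt sc_sqrt_ind
  have mThTh : Th * Th = T := cfc_mul_eq hAh hnnA sc_qu_qu
  have mThsA : Th * sA = PT := cfc_mul_eq hAh hnnA sc_qu_piq
  have msAsA : sA * sA = Tp := cfc_mul_eq hAh hnnA sc_piq_piq
  have mATp : (B * S * B) * Tp = T := by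
    rw [← hidA, hTpdef, hTdef]; exact cfc_mul_eq hAh hnnA sc_id_pis
  have mAJT : (B * S * B) * JT = 0 := by
    rw [← hidA, hJTdef, cfc_mul_eq hAh hnnA sc_id_j, TraceAuxCFC.cfc_zero]
  have mApA : Ap * (B * S * B) = PT := by
    rw [← hidA, hApdef, hPTdef]; exact cfc_mul_eq hAh hnnA sc_pi_id
  have mPTT : PT * T = T := cfc_mul_eq hAh hnnA sc_ind_sqrt
  have mXX : X * X = S := by
    rw [← hidS, hXdef]
    exact cfc_mul_eq hSh hnnS (fun t ht => Real.mul_self_sqrt ht)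
  have mXpX : Xp * X = PX := cfc_mul_eq hSh hnnS sc_pis_sqrt
  have mSJX : S * JX = 0 := by
    rw [← hidS, hJXdef, cfc_mul_eq hSh hnnS sc_id_j, TraceAuxCFC.cfc_zero]
  -- derived identities
  have dPTPB : PT * PB = PT := by
    have h1 : (B * S * B) * PB = B * S * B := by
      rw [Matrix.mul_assoc (B * S) B PB, mBPB]
    rw [← mApA, Matrix.mul_assoc, h1]
  have dPBPT : PB * PT = PT := by
    have := congrArg Matrix.transpose dPTPB
    rwa [Matrix.transpose_mul, hPTtr, hPBtr] at this
  have dPBT : PB * T = T := by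
    rw [← mPTT, ← Matrix.mul_assoc, dPBPT]
  have dW : X * B * JT = 0 := by
    have hW : (X * B * JT)ᴴ * (X * B * JT) = 0 := by
      rw [Matrix.conjTranspose_eq_transpose_of_trivial, Matrix.transpose_mul,
        Matrix.transpose_mul, hJTtr, hXtr, hBtr]
      calc JT * (B * X) * (X * B * JT)
          = JT * ((B * S * B) * JT) := by rw [← mXX]; noncomm_ring
        _ = 0 := by rw [mAJT, Matrix.mul_zero]
    exact Matrix.conjTranspose_mul_self_eq_zero.mp hW
  have dPXBJT : PX * B * JT = 0 := by
    calc PX * B * JT = Xp * (X * B * JT) := by rw [← mXpX]; noncomm_ring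
      _ = 0 := by rw [dW, Matrix.mul_zero]
  have dBJTBPX : B * JT * B * PX = 0 := by
    have h1 : PX * (B * (JT * B)) = 0 := by
      calc PX * (B * (JT * B)) = PX * B * JT * B := by noncomm_ring
        _ = 0 := by rw [dPXBJT, Matrix.zero_mul]
    have h2 := congrArg Matrix.transpose h1
    simp only [Matrix.transpose_mul, hBtr, hJTtr, hPXtr, Matrix.transpose_zero] at h2
    exact h2
  -- trace decomposition
  have hCPB : C * PB = C := by
    have h1 : C * JB = 0 := k1 JB mStJB
    have h2 : C * PB + C * JB = C := by rw [← Matrix.mul_add, mPBJB, Matrix.mul_one]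
    rw [h1, add_zero] at h2; exact h2
  have hJXC : JX * C = 0 := by
    have := k2 JX mSJX; rwa [hJXtr] at this
  have hsplit : Bp * (PT * B) + Bp * (JT * B) = PB := by
    calc Bp * (PT * B) + Bp * (JT * B) = Bp * ((PT + JT) * B) := by noncomm_ring
      _ = PB := by rw [mPTJT, Matrix.one_mul, mBpB]
  have hR0 : (C * (Bp * (JT * B))).trace = 0 := by
    have hPXpart : C * ((Bp * (JT * B)) * PX) = 0 := by
      apply k1
      calc St * ((Bp * (JT * B)) * PX) = (St * Bp) * (JT * (B * PX)) := by noncomm_ring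
        _ = B * (JT * (B * PX)) := by rw [mStBp]
        _ = B * JT * B * PX := by noncomm_ring
        _ = 0 := dBJTBPX
    have hJXpart : (C * ((Bp * (JT * B)) * JX)).trace = 0 := by
      rw [← Matrix.mul_assoc, Matrix.trace_mul_comm, ← Matrix.mul_assoc, hJXC,
        Matrix.zero_mul, Matrix.trace_zero]
    calc (C * (Bp * (JT * B))).trace
        = (C * ((Bp * (JT * B)) * PX)).trace + (C * ((Bp * (JT * B)) * JX)).trace := by
          rw [← Matrix.trace_add, ← Matrix.mul_add, ← Matrix.mul_add, mPXJX, Matrix.mul_one]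
      _ = 0 := by rw [hPXpart, Matrix.trace_zero, hJXpart, add_zero]
  -- the main bound
  have hkey := key0 (B * sA) (Bp * Th)
  have hLHS : ((B * sA)ᵀ * C * (Bp * Th)).trace = (C * (Bp * (PT * B))).trace := by
    rw [Matrix.transpose_mul, hsAtr, hBtr]
    calc ((sA * B) * C * (Bp * Th)).trace
        = ((sA * B) * (C * (Bp * Th))).trace := by rw [Matrix.mul_assoc]
      _ = ((C * (Bp * Th)) * (sA * B)).trace := Matrix.trace_mul_comm _ _
      _ = (C * (Bp * (PT * B))).trace := by
          rw [show (C * (Bp * Th)) * (sA * B) = C * (Bp * ((Th * sA) * B)) from by noncomm_ring,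
            mThsA]
  have hRHS1 : ((B * sA)ᵀ * S * (B * sA)).trace = T.trace := by
    rw [Matrix.transpose_mul, hsAtr, hBtr]
    have h1 : (sA * B) * S * (B * sA) = sA * ((B * S * B) * sA) := by noncomm_ring
    rw [h1, Matrix.trace_mul_comm, Matrix.mul_assoc (B * S * B) sA sA, msAsA, mATp]
  have hRHS2 : ((Bp * Th)ᵀ * St * (Bp * Th)).trace = T.trace := by
    rw [Matrix.transpose_mul, hThtr, hBptr]
    have h1 : (Th * Bp) * St * (Bp * Th) = Th * (((Bp * St) * Bp) * Th) := by noncomm_ring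
    rw [h1, mBpSt, mBBp, Matrix.trace_mul_comm, Matrix.mul_assoc PB Th Th, mThTh, dPBT]
  rw [hLHS, hRHS1, hRHS2] at hkey
  have heq : C.trace = (C * (Bp * (PT * B))).trace := by
    conv_lhs => rw [← hCPB]
    rw [← hsplit, Matrix.mul_add, Matrix.trace_add, hR0, add_zero]
  rw [heq]
  linarith
end

section
/- Let (Ω, F, μ) be a probability space, d ≥ 1, and (e_j)_{j∈ℕ} a sequence of measurable maps Ω → ℝ^d, each square-integrable with L²-norm (∫ ‖e_j‖² dμ)^{1/2} ≤ κ for a common constant κ < ∞. Let (Λ_j)_{j∈ℕ} be d×d real matrices with ∑_{j=0}^∞ ‖Λ_j‖_op < ∞, and let X : Ω → ℝ^d be a square-integrable map such that the partial sums ∑_{j=0}^{n} Λ_j·e_j converge to X in L²(μ; ℝ^d) as n → ∞. For m ∈ ℕ, let 𝒢_m ⊆ F be the σ-algebra generated by e_0, …, e_m. Then for every m, the L²-norm of X − E[X | 𝒢_m] satisfies (∫ ‖X − E[X | 𝒢_m]‖² dμ)^{1/2} ≤ κ·∑_{j=m+1}^∞ ‖Λ_j‖_op. -/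
open MeasureTheory Filter
open scoped ENNReal

section Aux

variable {α : Type*} {m m0 : MeasurableSpace α} {μ : Measure α}
variable {E : Type*} [NormedAddCommGroup E] [InnerProductSpace ℝ E] [CompleteSpace E]

lemma condexp_ae_eq_condexpL2' (hm : m ≤ m0) [IsProbabilityMeasure μ]
    {f : α → E} (hf : MemLp f 2 μ) :
    μ[f|m] =ᵐ[μ] (condExpL2 E ℝ hm (hf.toLp f) : α → E) := by
  refine (ae_eq_condExp_of_forall_setIntegral_eq hm (hf.integrable one_le_two)
    (fun s _ hμs => integrableOn_condExpL2_of_measure_ne_top hm hμs.ne _)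
    (fun s hs hμs => ?_) (aestronglyMeasurable_condExpL2 hm _)).symm
  rw [integral_condExpL2_eq hm (hf.toLp f) hs hμs.ne]
  exact setIntegral_congr_ae (hm s hs) (hf.coeFn_toLp.mono fun x hx _ => hx)

lemma memℒp_condexp_of_memℒp (hm : m ≤ m0) [IsProbabilityMeasure μ]
    {f : α → E} (hf : MemLp f 2 μ) : MemLp (μ[f|m]) 2 μ :=
  (Lp.memLp ((condExpL2 E ℝ hm (hf.toLp f) : Lp E 2 μ))).ae_eq
    (condexp_ae_eq_condexpL2' hm hf).symm

lemma eLpNorm_sub_condexp_le_of_memℒp (hm : m ≤ m0) [IsProbabilityMeasure μ]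
    {f g : α → E} (hf : MemLp f 2 μ) (hg : MemLp g 2 μ)
    (hgm : AEStronglyMeasurable[m] g μ) :
    eLpNorm (f - μ[f|m]) 2 μ ≤ eLpNorm (f - g) 2 μ := by
  haveI : Fact (m ≤ m0) := ⟨hm⟩
  set F : Lp E 2 μ := hf.toLp f with hF
  set G : Lp E 2 μ := hg.toLp g with hG
  have hGmem : G ∈ lpMeas E ℝ m 2 μ :=
    mem_lpMeas_iff_aestronglyMeasurable.mpr (hgm.congr hg.coeFn_toLp.symm)
  have hproj : ‖F - (condExpL2 E ℝ hm F : Lp E 2 μ)‖ ≤ ‖F - G‖ := by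
    have h1 : (condExpL2 E ℝ hm F : Lp E 2 μ)
        = (lpMeas E ℝ m 2 μ).starProjection F := rfl
    rw [h1, Submodule.starProjection_minimal]
    refine ciInf_le ⟨0, ?_⟩ (⟨G, hGmem⟩ : lpMeas E ℝ m 2 μ)
    rintro x ⟨y, rfl⟩
    exact norm_nonneg _
  have hae1 : (f - μ[f|m]) =ᵐ[μ] ⇑(F - (condExpL2 E ℝ hm F : Lp E 2 μ)) := by
    filter_upwards [hf.coeFn_toLp, condexp_ae_eq_condexpL2' hm hf,
      Lp.coeFn_sub F (condExpL2 E ℝ hm F : Lp E 2 μ)] with x h1 h2 h3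
    rw [h3]
    simp only [Pi.sub_apply, h3, hF, h1, h2]
  have hae2 : (f - g) =ᵐ[μ] ⇑(F - G) := by
    filter_upwards [hf.coeFn_toLp, hg.coeFn_toLp, Lp.coeFn_sub F G] with x h1 h2 h3
    rw [h3]
    simp only [Pi.sub_apply, h3, hF, hG, h1, h2]
  rw [eLpNorm_congr_ae hae1, eLpNorm_congr_ae hae2,
    ← ENNReal.ofReal_toReal (Lp.eLpNorm_ne_top (F - (condExpL2 E ℝ hm F : Lp E 2 μ))),
    ← ENNReal.ofReal_toReal (Lp.eLpNorm_ne_top (F - G)), ← Lp.norm_def, ← Lp.norm_def]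
  exact ENNReal.ofReal_le_ofReal hproj

omit [InnerProductSpace ℝ E] [CompleteSpace E] in
lemma sqrt_integral_sq_eq {f : α → E} (hf : MemLp f 2 μ) :
    Real.sqrt (∫ x, ‖f x‖ ^ 2 ∂μ) = (eLpNorm f 2 μ).toReal := by
  rw [hf.eLpNorm_eq_integral_rpow_norm two_ne_zero ENNReal.ofNat_ne_top,
    ENNReal.toReal_ofReal (by positivity)]
  have h2 : (2 : ℝ≥0∞).toReal = (2 : ℝ) := by simp
  rw [h2, Real.sqrt_eq_rpow]
  norm_num

end Aux

/-- **Near-epoch dependence of a one-sided vector moving average.**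
If `X = ∑_{j=0}^∞ Λ_j e_j` in `L²(μ; ℝ^d)`, where the `e_j` are measurable with L²-norms
bounded by `κ` and `∑_j ‖Λ_j‖_op < ∞`, then for every `m` the L²-distance from `X` to its
conditional expectation given `σ(e_0, …, e_m)` is at most `κ ∑_{j=m+1}^∞ ‖Λ_j‖_op`. -/
theorem vma_near_epoch_dependence
    {Ω : Type*} [MeasurableSpace Ω] (μ : Measure Ω) [IsProbabilityMeasure μ]
    (d : ℕ) (hd : 1 ≤ d)
    (e : ℕ → Ω → EuclideanSpace ℝ (Fin d))
    (hmeas : ∀ j, Measurable (e j))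
    (hL2 : ∀ j, MemLp (e j) 2 μ)
    (κ : ℝ) (hκ : ∀ j, Real.sqrt (∫ ω, ‖e j ω‖ ^ 2 ∂μ) ≤ κ)
    (Λ : ℕ → Matrix (Fin d) (Fin d) ℝ)
    (hΛ : Summable fun j => opNorm (Λ j))
    (X : Ω → EuclideanSpace ℝ (Fin d)) (hX : MemLp X 2 μ)
    (hconv : Tendsto
      (fun n => eLpNorm
        (fun ω => (∑ j ∈ Finset.range (n + 1),
          Matrix.toEuclideanLin (Λ j) (e j ω)) - X ω) 2 μ)
      atTop (nhds 0)) :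
    ∀ m : ℕ,
      Real.sqrt (∫ ω,
          ‖X ω - (μ[X | ⨆ j ∈ Finset.range (m + 1),
              MeasurableSpace.comap (e j) inferInstance]) ω‖ ^ 2 ∂μ) ≤
        κ * ∑' j : ℕ, opNorm (Λ (j + m + 1)) := by
  intro m
  set L : ℕ → EuclideanSpace ℝ (Fin d) →L[ℝ] EuclideanSpace ℝ (Fin d) :=
    fun j => LinearMap.toContinuousLinearMap (Matrix.toEuclideanLin (Λ j)) with hL
  have hm' : (⨆ j ∈ Finset.range (m + 1),
      MeasurableSpace.comap (e j) inferInstance : MeasurableSpace Ω)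
      ≤ (inferInstance : MeasurableSpace Ω) := by
    refine iSup_le fun j => iSup_le fun _ => ?_
    exact (hmeas j).comap_le
  set m' : MeasurableSpace Ω :=
    ⨆ j ∈ Finset.range (m + 1), MeasurableSpace.comap (e j) inferInstance with hm'def
  set T : ℝ := ∑' j : ℕ, opNorm (Λ (j + m + 1)) with hT
  have hκ0 : 0 ≤ κ := (Real.sqrt_nonneg _).trans (hκ 0)
  have hΛ0 : ∀ j, 0 ≤ opNorm (Λ j) := fun j => norm_nonneg _
  have hΛshift : Summable fun i => opNorm (Λ (i + (m + 1))) := by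
    have h := (summable_nat_add_iff (f := fun j => opNorm (Λ j)) (m + 1)).mpr hΛ
    exact h
  have hT0 : 0 ≤ T := tsum_nonneg fun j => hΛ0 _
  -- single-term bound
  have hterm : ∀ j, eLpNorm (fun ω => Matrix.toEuclideanLin (Λ j) (e j ω)) 2 μ ≤
      ENNReal.ofReal (opNorm (Λ j) * κ) := by
    intro j
    have hej : eLpNorm (e j) 2 μ ≤ ENNReal.ofReal κ := by
      rw [ENNReal.le_ofReal_iff_toReal_le (hL2 j).eLpNorm_ne_top hκ0,
        ← sqrt_integral_sq_eq (hL2 j)]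
      exact hκ j
    calc eLpNorm (fun ω => Matrix.toEuclideanLin (Λ j) (e j ω)) 2 μ
        ≤ eLpNorm (fun ω => ‖L j‖ * ‖e j ω‖) 2 μ := by
          refine eLpNorm_mono fun ω => ?_
          rw [Real.norm_of_nonneg (by positivity)]
          exact (L j).le_opNorm (e j ω)
      _ = ‖(‖L j‖)‖₊ * eLpNorm (fun ω => ‖e j ω‖) 2 μ := by
          rw [← enorm_eq_nnnorm, ← eLpNorm_const_smul (‖L j‖) (fun ω => ‖e j ω‖) 2 μ]
          rfl
      _ = ENNReal.ofReal (opNorm (Λ j)) * eLpNorm (e j) 2 μ := by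
          rw [eLpNorm_norm, ← enorm_eq_nnnorm, ← ofReal_norm, norm_norm]
          rfl
      _ ≤ ENNReal.ofReal (opNorm (Λ j)) * ENNReal.ofReal κ :=
          mul_le_mul_right hej _
      _ = ENNReal.ofReal (opNorm (Λ j) * κ) := (ENNReal.ofReal_mul (hΛ0 j)).symm
  -- measurability / integrability of the partial sums
  have hterm_mem : ∀ j, MemLp (fun ω => Matrix.toEuclideanLin (Λ j) (e j ω)) 2 μ :=
    fun j => (hL2 j).continuousLinearMap_comp (L j)
  set S : Ω → EuclideanSpace ℝ (Fin d) :=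
    fun ω => ∑ j ∈ Finset.range (m + 1), Matrix.toEuclideanLin (Λ j) (e j ω) with hS
  have hS_mem : MemLp S 2 μ := memLp_finsetSum _ fun j _ => hterm_mem j
  have hS_sm : StronglyMeasurable[m'] S := by
    refine Finset.stronglyMeasurable_fun_sum _ fun j hj => ?_
    have hle : MeasurableSpace.comap (e j) inferInstance ≤ m' :=
      le_iSup₂ (f := fun j (_ : j ∈ Finset.range (m + 1)) =>
        MeasurableSpace.comap (e j) inferInstance) j hj
    have hej : Measurable[m'] (e j) := measurable_iff_comap_le.mpr hle
    exact (L j).continuous.comp_stronglyMeasurable hej.stronglyMeasurable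
  have hS_aesm : AEStronglyMeasurable[m'] S μ := hS_sm.aestronglyMeasurable
  -- partial-sum tail bound
  have hSn : ∀ n, m ≤ n → eLpNorm (fun ω => X ω - S ω) 2 μ ≤
      eLpNorm (fun ω => (∑ j ∈ Finset.range (n + 1),
        Matrix.toEuclideanLin (Λ j) (e j ω)) - X ω) 2 μ + ENNReal.ofReal (κ * T) := by
    intro n hn
    set Sn : Ω → EuclideanSpace ℝ (Fin d) :=
      fun ω => ∑ j ∈ Finset.range (n + 1), Matrix.toEuclideanLin (Λ j) (e j ω) with hSn'
    have hSn_mem : MemLp Sn 2 μ := memLp_finsetSum _ fun j _ => hterm_mem j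
    have hsplit : (fun ω => X ω - S ω)
        = (fun ω => X ω - Sn ω) + fun ω => Sn ω - S ω := by
      funext ω
      simp [sub_add_sub_cancel]
    have htail : (fun ω => Sn ω - S ω)
        = fun ω => ∑ j ∈ Finset.Ico (m + 1) (n + 1), Matrix.toEuclideanLin (Λ j) (e j ω) := by
      funext ω
      simp only [hSn', hS]
      rw [← Finset.sum_range_add_sum_Ico _ (Nat.succ_le_succ hn)]
      abel
    have h2 : eLpNorm (fun ω => Sn ω - S ω) 2 μ ≤ ENNReal.ofReal (κ * T) := by
      rw [htail]
      have hsum : (fun ω => ∑ j ∈ Finset.Ico (m + 1) (n + 1),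
          Matrix.toEuclideanLin (Λ j) (e j ω))
          = ∑ j ∈ Finset.Ico (m + 1) (n + 1),
            fun ω => Matrix.toEuclideanLin (Λ j) (e j ω) := by
        funext ω; simp
      rw [hsum]
      calc eLpNorm (∑ j ∈ Finset.Ico (m + 1) (n + 1),
            fun ω => Matrix.toEuclideanLin (Λ j) (e j ω)) 2 μ
          ≤ ∑ j ∈ Finset.Ico (m + 1) (n + 1),
            eLpNorm (fun ω => Matrix.toEuclideanLin (Λ j) (e j ω)) 2 μ :=
            eLpNorm_sum_le (fun j _ => (hterm_mem j).aestronglyMeasurable) one_le_two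
        _ ≤ ∑ j ∈ Finset.Ico (m + 1) (n + 1), ENNReal.ofReal (opNorm (Λ j) * κ) :=
            Finset.sum_le_sum fun j _ => hterm j
        _ = ENNReal.ofReal (∑ j ∈ Finset.Ico (m + 1) (n + 1), opNorm (Λ j) * κ) :=
            (ENNReal.ofReal_sum_of_nonneg fun j _ => mul_nonneg (hΛ0 j) hκ0).symm
        _ ≤ ENNReal.ofReal (κ * T) := by
            refine ENNReal.ofReal_le_ofReal ?_
            rw [← Finset.sum_mul, mul_comm]
            refine mul_le_mul_of_nonneg_left ?_ hκ0
            rw [Finset.sum_Ico_eq_sum_range]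
            refine le_trans (le_of_eq (Finset.sum_congr rfl fun i _ => by
              rw [add_comm (m + 1) i])) ?_
            refine le_trans (Summable.sum_le_tsum _ (fun i _ => hΛ0 _) hΛshift) ?_
            rw [hT]
            exact le_of_eq (tsum_congr fun i => by rw [← add_assoc])
    calc eLpNorm (fun ω => X ω - S ω) 2 μ
        ≤ eLpNorm (fun ω => X ω - Sn ω) 2 μ + eLpNorm (fun ω => Sn ω - S ω) 2 μ := by
          rw [hsplit]
          exact eLpNorm_add_le (hX.sub hSn_mem).aestronglyMeasurable
            (hSn_mem.sub hS_mem).aestronglyMeasurable one_le_two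
      _ ≤ eLpNorm (fun ω => Sn ω - X ω) 2 μ + ENNReal.ofReal (κ * T) := by
          have h : eLpNorm (fun ω => X ω - Sn ω) 2 μ = eLpNorm (fun ω => Sn ω - X ω) 2 μ :=
            eLpNorm_sub_comm X Sn 2 μ
          rw [h]
          exact add_le_add_right h2 _
      _ = _ := by rw [hSn']
  -- take the limit in n
  have hkey : eLpNorm (fun ω => X ω - S ω) 2 μ ≤ ENNReal.ofReal (κ * T) := by
    have hlim : Tendsto (fun n => eLpNorm
        (fun ω => (∑ j ∈ Finset.range (n + 1),
          Matrix.toEuclideanLin (Λ j) (e j ω)) - X ω) 2 μ + ENNReal.ofReal (κ * T))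
        atTop (nhds (ENNReal.ofReal (κ * T))) := by
      simpa using hconv.add (tendsto_const_nhds
        (x := ENNReal.ofReal (κ * T)) (f := atTop))
    exact ge_of_tendsto hlim (eventually_atTop.2 ⟨m, fun n hn => hSn n hn⟩)
  have hcond : eLpNorm (fun ω => X ω - (μ[X|m']) ω) 2 μ ≤ ENNReal.ofReal (κ * T) :=
    le_trans (eLpNorm_sub_condexp_le_of_memℒp hm' hX hS_mem hS_aesm) hkey
  have hYmem : MemLp (μ[X|m']) 2 μ := memℒp_condexp_of_memℒp hm' hX
  have hmem : MemLp (fun ω => X ω - (μ[X|m']) ω) 2 μ := hX.sub hYmem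
  rw [sqrt_integral_sq_eq hmem]
  exact ENNReal.toReal_le_of_le_ofReal (by positivity) hcond
end
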